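/- arXiv:2009.02015 — 13 statements merged into one kernel-verified Lean document; each statement's English description precedes it below -/
import Mathlib

section
/- Let T be a real n×n matrix with nonnegative entries (T ≥ 0 entrywise) and spectral radius ρ. Then for every ε > 0 there exists a vector w ∈ ℝⁿ with all entries strictly positive such that Tw ≤ (ρ + ε)w entrywise. -/
open Matrix
open scoped ENNReal NNReal

/-- The spectral radius of a complex square matrix: the supremum of the moduli
of its (complex) eigenvalues. -/
noncomputable def specRad {m : Type*} [Fintype m] [DecidableEq m]
    (M : Matrix m m ℂ) : ℝ :=
  sSup ((fun z : ℂ => ‖z‖) '' spectrum ℂ M)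

/-- The spectral radius of a real square matrix: the supremum of the moduli
of its complex eigenvalues. -/
noncomputable def specRadR {m : Type*} [Fintype m] [DecidableEq m]
    (M : Matrix m m ℝ) : ℝ :=
  specRad (M.map Complex.ofReal)

section Aux

attribute [local instance] Matrix.linftyOpNormedRing Matrix.linftyOpNormedAlgebra

private lemma entry_norm_le {n : ℕ} (A : Matrix (Fin n) (Fin n) ℂ) (i j : Fin n) :
    ‖A i j‖ ≤ ‖A‖ := by
  have h : ‖A i j‖₊ ≤ ‖A‖₊ := by
    rw [Matrix.linfty_opNNNorm_def]
    exact le_trans (Finset.single_le_sum (f := fun j' => ‖A i j'‖₊)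
        (fun _ _ => zero_le) (Finset.mem_univ j))
      (Finset.le_sup (f := fun i => ∑ j', ‖A i j'‖₊) (Finset.mem_univ i))
  exact_mod_cast h

private lemma norm_le_specRad {n : ℕ} (M : Matrix (Fin n) (Fin n) ℂ) {μ : ℂ}
    (hμ : μ ∈ spectrum ℂ M) : ‖μ‖ ≤ specRad M := by
  have : CompleteSpace (Matrix (Fin n) (Fin n) ℂ) := FiniteDimensional.complete ℂ _
  exact le_csSup (((spectrum.isCompact M).image continuous_norm).bddAbove) ⟨μ, hμ, rfl⟩

private lemma specRad_nonneg {n : ℕ} [NeZero n] (M : Matrix (Fin n) (Fin n) ℂ) :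
    0 ≤ specRad M := by
  have : CompleteSpace (Matrix (Fin n) (Fin n) ℂ) := FiniteDimensional.complete ℂ _
  obtain ⟨μ, hμ⟩ := spectrum.nonempty M
  exact le_trans (norm_nonneg μ) (norm_le_specRad M hμ)

/-- Key analytic lemma: if `s > specRad M ≥ 0` then `∑ ‖(s⁻¹ M)^k‖ < ∞`. -/
private lemma summable_norm_pow {n : ℕ} [NeZero n] (M : Matrix (Fin n) (Fin n) ℂ)
    {s : ℝ} (hs : specRad M < s) :
    Summable fun k : ℕ => ‖((s : ℂ)⁻¹ • M) ^ k‖ := by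
  have : CompleteSpace (Matrix (Fin n) (Fin n) ℂ) := FiniteDimensional.complete ℂ _
  have hρ0 : 0 ≤ specRad M := specRad_nonneg M
  have hs0 : 0 < s := lt_of_le_of_lt hρ0 hs
  set a : Matrix (Fin n) (Fin n) ℂ := (s : ℂ)⁻¹ • M with ha
  set t : ℝ := specRad M / s with ht
  have ht1 : t < 1 := (div_lt_one hs0).2 hs
  have ht0 : 0 ≤ t := div_nonneg hρ0 hs0.le
  -- spectral radius of `a` is at most `t < 1`
  have hrad : spectralRadius ℂ a ≤ ENNReal.ofReal t := by
    rw [spectralRadius]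
    refine iSup₂_le fun μ hμ => ?_
    have hc : ((s : ℂ)⁻¹ : ℂ) ≠ 0 := by
      simp [Complex.ofReal_ne_zero, hs0.ne']
    have key : a = (Units.mk0 _ hc : ℂˣ) • M := by simp [ha, Units.smul_def]
    rw [key, spectrum.unit_smul_eq_smul (R := ℂ) M (Units.mk0 _ hc)] at hμ
    obtain ⟨ν, hν, rfl⟩ := hμ
    have hν' : ‖ν‖ ≤ specRad M := norm_le_specRad M hν
    have : ‖(Units.mk0 ((s:ℂ)⁻¹) hc : ℂˣ) • ν‖ ≤ t := by
      have : ‖(Units.mk0 ((s:ℂ)⁻¹) hc : ℂˣ) • ν‖ = s⁻¹ * ‖ν‖ := by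
        simp [Units.smul_def, norm_smul, abs_of_pos hs0]
      rw [this, ht, div_eq_inv_mul]
      exact mul_le_mul_of_nonneg_left hν' (inv_nonneg.2 hs0.le)
    calc (‖(Units.mk0 ((s:ℂ)⁻¹) hc : ℂˣ) • ν‖₊ : ℝ≥0∞)
        = ENNReal.ofReal ‖(Units.mk0 ((s:ℂ)⁻¹) hc : ℂˣ) • ν‖ := by
          rw [← coe_nnnorm, ENNReal.ofReal_coe_nnreal]
      _ ≤ ENNReal.ofReal t := ENNReal.ofReal_le_ofReal this
  -- choose `r` with `t < r < 1`
  set r : ℝ := (t + 1) / 2 with hr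
  have hr0 : 0 < r := by positivity
  have hr1 : r < 1 := by rw [hr]; linarith
  have htr : t < r := by rw [hr]; linarith
  -- Gelfand: eventually `‖a^k‖ < r^k`
  have hG := spectrum.pow_norm_pow_one_div_tendsto_nhds_spectralRadius a
  have hlt : spectralRadius ℂ a < ENNReal.ofReal r :=
    lt_of_le_of_lt hrad (by exact_mod_cast ENNReal.ofReal_lt_ofReal_iff hr0 |>.2 htr)
  have hev : ∀ᶠ k : ℕ in Filter.atTop, ENNReal.ofReal (‖a ^ k‖ ^ (1 / (k:ℝ))) <
      ENNReal.ofReal r := hG.eventually_lt_const hlt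
  have hev2 : ∀ᶠ k : ℕ in Filter.atTop, ‖a ^ k‖ ≤ r ^ k := by
    filter_upwards [hev, Filter.eventually_ge_atTop 1] with k hk hk1
    have hk' : ‖a ^ k‖ ^ (1 / (k:ℝ)) < r := (ENNReal.ofReal_lt_ofReal_iff hr0).1 hk
    have hkpos : (0:ℝ) < k := by exact_mod_cast hk1
    have h1 : ‖a ^ k‖ = (‖a ^ k‖ ^ (1 / (k:ℝ))) ^ k := by
      rw [← Real.rpow_natCast (‖a ^ k‖ ^ (1 / (k:ℝ))) k, ← Real.rpow_mul (norm_nonneg _),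
        one_div, inv_mul_cancel₀ hkpos.ne', Real.rpow_one]
    rw [h1]
    exact (pow_le_pow_left₀ (Real.rpow_nonneg (norm_nonneg _) _) hk'.le k)
  -- comparison with geometric series
  have hgeo : Summable fun k : ℕ => r ^ k := summable_geometric_of_lt_one hr0.le hr1
  refine summable_of_isBigO_nat hgeo ?_
  rw [Asymptotics.isBigO_iff]
  refine ⟨1, ?_⟩
  filter_upwards [hev2] with k hk
  rw [Real.norm_eq_abs, Real.norm_eq_abs, abs_of_nonneg (norm_nonneg _),
    abs_of_pos (pow_pos hr0 k), one_mul]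
  exact hk

private lemma summable_entry_norm {n : ℕ} [NeZero n] (M : Matrix (Fin n) (Fin n) ℂ)
    {s : ℝ} (hs : specRad M < s) (i j : Fin n) :
    Summable fun k : ℕ => ‖(((s : ℂ)⁻¹ • M) ^ k) i j‖ :=
  Summable.of_nonneg_of_le (fun _ => norm_nonneg _)
    (fun k => entry_norm_le (((s : ℂ)⁻¹ • M) ^ k) i j) (summable_norm_pow M hs)

end Aux

section Main

set_option maxHeartbeats 1000000 in
theorem nonneg_matrix_almost_subinvariant_vector
    {n : ℕ} (T : Matrix (Fin n) (Fin n) ℝ)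
    (hT : ∀ i j, 0 ≤ T i j) :
    ∀ ε : ℝ, 0 < ε → ∃ w : Fin n → ℝ, (∀ i, 0 < w i) ∧
      ∀ i, T.mulVec w i ≤ (specRadR T + ε) * w i := by
  intro ε hε
  rcases Nat.eq_zero_or_pos n with hn | hn
  · subst hn
    exact ⟨fun _ => 1, fun i => i.elim0, fun i => i.elim0⟩
  haveI : NeZero n := ⟨hn.ne'⟩
  set M : Matrix (Fin n) (Fin n) ℂ := T.map Complex.ofReal with hM
  set ρ : ℝ := specRadR T with hρ
  have hρM : ρ = specRad M := rfl
  have hρ0 : 0 ≤ ρ := hρM ▸ specRad_nonneg M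
  set s : ℝ := ρ + ε with hsdef
  have hs0 : 0 < s := by positivity
  have hρs : specRad M < s := by rw [← hρM]; linarith
  -- the rescaled real matrix
  set B : Matrix (Fin n) (Fin n) ℝ := s⁻¹ • T with hB
  have hB0 : ∀ k i j, 0 ≤ (B ^ k) i j := by
    intro k
    induction k with
    | zero => intro i j; rcases eq_or_ne i j with h | h <;>
        simp [Matrix.one_apply, h]
    | succ k ih =>
        intro i j
        rw [pow_succ, Matrix.mul_apply]
        exact Finset.sum_nonneg fun l _ => mul_nonneg (ih i l)
          (smul_nonneg (inv_nonneg.2 hs0.le) (hT l j))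
  -- relate powers of B with powers of the complex matrix
  have hmap : ∀ k : ℕ, (B ^ k).map Complex.ofReal = ((s : ℂ)⁻¹ • M) ^ k := by
    intro k
    have h1 : B.map Complex.ofReal = (s : ℂ)⁻¹ • M := by
      rw [hB, hM]
      ext i j
      rw [Matrix.map_apply, Matrix.smul_apply, smul_eq_mul, Complex.ofReal_mul,
        Complex.ofReal_inv, Matrix.smul_apply, Matrix.map_apply, smul_eq_mul]
    rw [← h1]
    exact map_pow (Complex.ofRealHom.mapMatrix (m := Fin n)) B k
  -- entrywise summability
  have hent : ∀ i j, Summable fun k : ℕ => (B ^ k) i j := by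
    intro i j
    rw [← summable_abs_iff]
    refine (summable_entry_norm M hρs i j).congr fun k => ?_
    rw [← hmap k, Matrix.map_apply, Complex.norm_real, Real.norm_eq_abs]
  set f : ℕ → Fin n → ℝ := fun k i => ∑ j, (B ^ k) i j with hf
  have hfsum : ∀ i, Summable fun k => f k i := fun i =>
    summable_sum fun j _ => hent i j
  have hfnn : ∀ k i, 0 ≤ f k i := fun k i =>
    Finset.sum_nonneg fun j _ => hB0 k i j
  set w : Fin n → ℝ := fun i => ∑' k, f k i with hw
  have hw1 : ∀ i, 1 ≤ w i := by
    intro i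
    have h0 : f 0 i = 1 := by simp [hf, Matrix.one_apply]
    calc (1:ℝ) = f 0 i := h0.symm
      _ ≤ w i := Summable.le_tsum (hfsum i) 0 fun k _ => hfnn k i
  refine ⟨w, fun i => lt_of_lt_of_le one_pos (hw1 i), fun i => ?_⟩
  -- the key computation
  have hBw : ∑ j, B i j * w j = ∑' k, f (k + 1) i := by
    calc ∑ j, B i j * w j = ∑ j, ∑' k, B i j * f k j := by
          refine Finset.sum_congr rfl fun j _ => ?_
          rw [hw]
          exact ((hfsum j).tsum_mul_left (B i j)).symm
      _ = ∑' k, ∑ j, B i j * f k j :=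
          (Summable.tsum_finsetSum fun j _ => (hfsum j).mul_left (B i j)).symm
      _ = ∑' k, f (k + 1) i := by
          refine tsum_congr fun k => ?_
          show (∑ j, B i j * ∑ l, (B ^ k) j l) = ∑ l, (B ^ (k + 1)) i l
          simp only [pow_succ', Matrix.mul_apply, Finset.mul_sum]
          exact Finset.sum_comm
  have hle : ∑' k, f (k + 1) i ≤ w i := by
    refine Summable.tsum_le_tsum_of_inj (hf := ?_) (fun k => k + 1) (fun a b h => Nat.succ_injective h)
      (fun c _ => hfnn c i) (fun k => le_rfl) (hfsum i)
    exact (summable_nat_add_iff (f := fun k => f k i) 1).2 (hfsum i)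
  have hmain : ∑ j, B i j * w j ≤ w i := by rw [hBw]; exact hle
  have hTB : ∀ j, T i j = s * B i j := by
    intro j
    rw [hB, Matrix.smul_apply, smul_eq_mul, ← mul_assoc, mul_inv_cancel₀ hs0.ne', one_mul]
  calc T.mulVec w i = ∑ j, T i j * w j := by simp [Matrix.mulVec, dotProduct]
    _ = s * ∑ j, B i j * w j := by
        rw [Finset.mul_sum]
        exact Finset.sum_congr rfl fun j _ => by rw [hTB j]; ring
    _ ≤ s * w i := mul_le_mul_of_nonneg_left hmain hs0.le
    _ = (specRadR T + ε) * w i := by rw [hsdef]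

end Main
end

section
/- Let T be a real n×n matrix with nonnegative entries (T ≥ 0 entrywise) and spectral radius ρ = ρ(T) < 1, and suppose the spectrum of A = I - T consists of positive real numbers. Then for every real α with 0 < α < 2/(1+ρ) (where 2/(1+ρ) > 1), the spectral radius of the entrywise absolute value |T_α| of T_α = (1-α)I + αT is strictly less than 1. -/
open Matrix
open scoped ENNReal NNReal Pointwise

attribute [local instance] Matrix.linftyOpNormedRing Matrix.linftyOpNormedAlgebra
  Matrix.linftyOpNormedAddCommGroup

noncomputable local instance auxCompleteSpace {m : Type*} [Fintype m] :
    CompleteSpace (Matrix m m ℂ) :=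
  (by infer_instance : CompleteSpace (m → m → ℂ))

lemma aux_pow_entry {n : ℕ} {A B : Matrix (Fin n) (Fin n) ℝ}
    (hA : ∀ i j, 0 ≤ A i j) (h : ∀ i j, A i j ≤ B i j) (k : ℕ) :
    ∀ i j, 0 ≤ (A ^ k) i j ∧ (A ^ k) i j ≤ (B ^ k) i j := by
  induction k with
  | zero =>
    intro i j
    by_cases hij : i = j <;> simp [pow_zero, Matrix.one_apply, hij]
  | succ k ih =>
    intro i j
    rw [pow_succ, pow_succ, Matrix.mul_apply, Matrix.mul_apply]
    constructor
    · exact Finset.sum_nonneg fun l _ => mul_nonneg (ih i l).1 (hA l j)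
    · exact Finset.sum_le_sum fun l _ =>
        mul_le_mul (ih i l).2 (h l j) (hA l j) ((ih i l).1.trans (ih i l).2)

lemma aux_nnnorm_map_le {n : ℕ} (M N : Matrix (Fin n) (Fin n) ℝ)
    (h : ∀ i j, |M i j| ≤ N i j) :
    ‖M.map Complex.ofReal‖₊ ≤ ‖N.map Complex.ofReal‖₊ := by
  rw [Matrix.linfty_opNNNorm_def, Matrix.linfty_opNNNorm_def]
  refine Finset.sup_mono_fun fun i _ => Finset.sum_le_sum fun j _ => ?_
  rw [← NNReal.coe_le_coe]
  simp only [Matrix.map_apply, coe_nnnorm, Complex.norm_real, Real.norm_eq_abs]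
  exact (h i j).trans (le_abs_self _)

theorem asynchronous_first_order_richardson_convergence
    {n : ℕ} (T : Matrix (Fin n) (Fin n) ℝ)
    (hT : ∀ i j, 0 ≤ T i j)
    (ρ : ℝ) (hρ : ρ = specRadR T) (hρ1 : ρ < 1)
    (hspec : ∀ μ ∈ spectrum ℂ
        (((1 : Matrix (Fin n) (Fin n) ℝ) - T).map Complex.ofReal),
      ∃ r : ℝ, 0 < r ∧ μ = (r : ℂ)) :
    1 < 2 / (1 + ρ) ∧
    ∀ α : ℝ, 0 < α → α < 2 / (1 + ρ) →
      specRadR (Matrix.of fun i j =>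
        |((1 - α) • (1 : Matrix (Fin n) (Fin n) ℝ) + α • T) i j|) < 1 := by
  have hρ0 : 0 ≤ ρ := by
    rw [hρ]
    exact Real.sSup_nonneg (by rintro x ⟨z, -, rfl⟩; exact norm_nonneg z)
  refine ⟨(one_lt_div (by linarith)).mpr (by linarith), fun α hα hα2 => ?_⟩
  -- notation
  set c : ℝ := |1 - α| with hc
  have hc0 : 0 ≤ c := abs_nonneg _
  have hkey : c + α * ρ < 1 := by
    rcases abs_cases (1 - α) with ⟨h1, h2⟩ | ⟨h1, h2⟩
    · rw [hc, h1]; nlinarith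
    · rw [hc, h1]
      have h3 : α * (1 + ρ) < 2 := by
        have := (lt_div_iff₀ (by linarith : (0:ℝ) < 1 + ρ)).mp hα2
        linarith
      nlinarith
  set A : Matrix (Fin n) (Fin n) ℝ :=
    Matrix.of (fun i j => |((1 - α) • (1 : Matrix (Fin n) (Fin n) ℝ) + α • T) i j|) with hA
  set B : Matrix (Fin n) (Fin n) ℝ := c • (1 : Matrix (Fin n) (Fin n) ℝ) + α • T with hB
  have hAnn : ∀ i j, 0 ≤ A i j := fun i j => abs_nonneg _
  have hABle : ∀ i j, A i j ≤ B i j := by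
    intro i j
    have h1 : A i j = |(1 - α) * (1 : Matrix (Fin n) (Fin n) ℝ) i j + α * T i j| := by
      simp [hA, Matrix.add_apply, Matrix.smul_apply, smul_eq_mul]
    have h2 : B i j = c * (1 : Matrix (Fin n) (Fin n) ℝ) i j + α * T i j := by
      simp [hB, Matrix.add_apply, Matrix.smul_apply, smul_eq_mul]
    rw [h1, h2]
    have he0 : (0:ℝ) ≤ (1 : Matrix (Fin n) (Fin n) ℝ) i j := by
      by_cases hij : i = j <;> simp [Matrix.one_apply, hij]
    calc |(1 - α) * (1 : Matrix (Fin n) (Fin n) ℝ) i j + α * T i j|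
        ≤ |(1 - α) * (1 : Matrix (Fin n) (Fin n) ℝ) i j| + |α * T i j| := abs_add_le _ _
      _ = c * (1 : Matrix (Fin n) (Fin n) ℝ) i j + α * T i j := by
          rw [abs_mul, abs_mul, abs_of_nonneg he0, abs_of_pos hα,
            abs_of_nonneg (hT i j)]
  -- complexified matrices
  set T' : Matrix (Fin n) (Fin n) ℂ := T.map Complex.ofReal with hT'
  set A' : Matrix (Fin n) (Fin n) ℂ := A.map Complex.ofReal with hA'
  set B' : Matrix (Fin n) (Fin n) ℂ := B.map Complex.ofReal with hB'
  -- spectral radius bound for B'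
  have hρT : ∀ μ ∈ spectrum ℂ T', ‖μ‖ ≤ ρ := by
    intro μ hμ
    rw [hρ]
    exact le_csSup ((T'.finite_spectrum.image _).bddAbove) ⟨μ, hμ, rfl⟩
  have hα0 : (α : ℂ) ≠ 0 := by exact_mod_cast hα.ne'
  set u : ℂˣ := Units.mk0 (α : ℂ) hα0 with hu
  have hB'spec : spectrum ℂ B' = {(c : ℂ)} + u • spectrum ℂ T' := by
    have : B' = algebraMap ℂ (Matrix (Fin n) (Fin n) ℂ) (c : ℂ) + u • T' := by
      rw [Algebra.algebraMap_eq_smul_one, Units.smul_def]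
      ext i j
      by_cases hij : i = j <;>
        simp [hB', hB, hT', hu, Matrix.add_apply, Matrix.smul_apply, Matrix.one_apply, hij,
          smul_eq_mul]
    rw [this, ← spectrum.singleton_add_eq, spectrum.unit_smul_eq_smul]
  have hB'rad : spectralRadius ℂ B' ≤ ENNReal.ofReal (c + α * ρ) := by
    rw [spectralRadius]
    refine iSup₂_le fun z hz => ?_
    rw [hB'spec] at hz
    rw [Set.mem_add] at hz
    obtain ⟨x, hx, y, hy, hxyz⟩ := hz
    rw [Set.mem_singleton_iff] at hx
    obtain ⟨μ, hμ, rfl⟩ := hy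
    have hznorm : ‖z‖ ≤ c + α * ρ := by
      rw [← hxyz, hx]
      calc ‖(c : ℂ) + u • μ‖
          ≤ ‖(c : ℂ)‖ + ‖(α : ℂ) * μ‖ := norm_add_le _ _
        _ = c + α * ‖μ‖ := by
            rw [norm_mul, Complex.norm_real, Complex.norm_real, Real.norm_eq_abs,
              Real.norm_eq_abs, abs_of_nonneg hc0, abs_of_pos hα]
        _ ≤ c + α * ρ := by nlinarith [hρT μ hμ, hα]
    rw [← enorm_eq_nnnorm, ← ofReal_norm]
    exact ENNReal.ofReal_le_ofReal hznorm
  -- every eigenvalue of A' has modulus at most c + α * ρ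
  have hmain : ∀ μ ∈ spectrum ℂ A', ‖μ‖ ≤ c + α * ρ := by
    intro μ hμ
    rcases Nat.eq_zero_or_pos n with hn | hn
    · exfalso
      subst hn
      rw [spectrum.mem_iff] at hμ
      exact hμ (isUnit_of_subsingleton _)
    haveI : Nonempty (Fin n) := ⟨⟨0, hn⟩⟩
    have hle : (‖μ‖₊ : ℝ≥0∞) ≤ spectralRadius ℂ B' := by
      refine ge_of_tendsto (spectrum.pow_nnnorm_pow_one_div_tendsto_nhds_spectralRadius B') ?_
      filter_upwards [Filter.eventually_ge_atTop 1] with k hk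
      have hμk : μ ^ k ∈ spectrum ℂ (A' ^ k) :=
        spectrum.pow_image_subset A' k ⟨μ, hμ, rfl⟩
      have h1 : ‖μ ^ k‖₊ ≤ ‖A' ^ k‖₊ := by
        have := spectrum.norm_le_norm_of_mem hμk
        exact this
      have hApow : A' ^ k = (A ^ k).map Complex.ofReal := by
        rw [hA']
        exact (map_pow (Complex.ofRealHom.mapMatrix
          (m := Fin n)) A k).symm
      have hBpow : B' ^ k = (B ^ k).map Complex.ofReal := by
        rw [hB']
        exact (map_pow (Complex.ofRealHom.mapMatrix
          (m := Fin n)) B k).symm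
      have h2 : ‖A' ^ k‖₊ ≤ ‖B' ^ k‖₊ := by
        rw [hApow, hBpow]
        refine aux_nnnorm_map_le _ _ fun i j => ?_
        have := aux_pow_entry hAnn hABle k i j
        rw [abs_of_nonneg this.1]
        exact this.2
      have h3 : (‖μ‖₊ : ℝ≥0∞) ^ k ≤ (‖B' ^ k‖₊ : ℝ≥0∞) := by
        rw [← ENNReal.coe_pow, ENNReal.coe_le_coe, ← nnnorm_pow]
        exact h1.trans h2
      have hk0 : (k : ℝ) ≠ 0 := by positivity
      calc (‖μ‖₊ : ℝ≥0∞) = ((‖μ‖₊ : ℝ≥0∞) ^ k) ^ (1 / (k : ℝ)) := by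
            rw [← ENNReal.rpow_natCast, ← ENNReal.rpow_mul, mul_one_div,
              div_self hk0, ENNReal.rpow_one]
        _ ≤ (‖B' ^ k‖₊ : ℝ≥0∞) ^ (1 / (k : ℝ)) :=
            ENNReal.rpow_le_rpow h3 (by positivity)
    have := hle.trans hB'rad
    rw [← enorm_eq_nnnorm, ← ofReal_norm] at this
    exact (ENNReal.ofReal_le_ofReal_iff (by nlinarith)).mp this
  -- conclude
  unfold specRadR specRad
  refine lt_of_le_of_lt (Real.sSup_le ?_ (by nlinarith)) hkey
  rintro x ⟨μ, hμ, rfl⟩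
  exact hmain μ hμ
end

section
/- Let n ≥ 1, let w ∈ ℝⁿ have strictly positive entries, let γ ∈ [0,1), let x* ∈ ℂⁿ, and let (T_k)_{k∈ℕ} be a family of maps T_k : ℂⁿ → ℂⁿ such that T_k(x*) = x* and ‖T_k(x) - x*‖_w ≤ γ‖x - x*‖_w for all k and all x ∈ ℂⁿ, where ‖y‖_w = max_{1≤i≤n} |y_i|/w_i. Let (J_k)_{k≥1} be subsets of {1,…,n} such that every index i ∈ {1,…,n} belongs to J_k for infinitely many k, and let s_j(k) be integers with 0 ≤ s_j(k) ≤ k-1 and lim_{k→∞} s_j(k) = ∞ for each j. Define the asynchronous iterates from any x⁰ ∈ ℂⁿ by: x_i^k = x_i^{k-1} if i ∉ J_k, and x_i^k = (T_k(x_1^{s_1(k)}, …, x_n^{s_n(k)}))_i if i ∈ J_k. Then x^k converges to x* as k → ∞. -/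
open Filter

/-- The weighted maximum norm ‖y‖_w = max_i ‖y_i‖ / w_i on ℂⁿ. -/
noncomputable def wnormC {n : ℕ} (w : Fin n → ℝ) (y : Fin n → ℂ) : ℝ :=
  ⨆ i, ‖y i‖ / w i

theorem le_wnormC {n : ℕ} (w : Fin n → ℝ) (y : Fin n → ℂ) (i : Fin n) :
    ‖y i‖ / w i ≤ wnormC w y :=
  le_ciSup (f := fun i => ‖y i‖ / w i) (Finite.bddAbove_range _) i

theorem asynchronous_iteration_convergence
    {n : ℕ} (hn : 1 ≤ n)
    (w : Fin n → ℝ) (hw : ∀ i, 0 < w i)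
    (γ : ℝ) (hγ0 : 0 ≤ γ) (hγ1 : γ < 1)
    (xstar : Fin n → ℂ)
    (T : ℕ → (Fin n → ℂ) → (Fin n → ℂ))
    (hfix : ∀ k, T k xstar = xstar)
    (hcontr : ∀ k, ∀ x : Fin n → ℂ,
      wnormC w (T k x - xstar) ≤ γ * wnormC w (x - xstar))
    (J : ℕ → Set (Fin n))
    (hJ : ∀ i : Fin n, ∀ K : ℕ, ∃ k : ℕ, K ≤ k ∧ 1 ≤ k ∧ i ∈ J k)
    (s : Fin n → ℕ → ℕ)
    (hs : ∀ j : Fin n, ∀ k : ℕ, 1 ≤ k → s j k ≤ k - 1)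
    (hstend : ∀ j : Fin n, Tendsto (s j) atTop atTop)
    (x : ℕ → Fin n → ℂ)
    (hrec : ∀ k : ℕ, 1 ≤ k → ∀ i : Fin n,
      (i ∈ J k → x k i = T k (fun j => x (s j k) j) i) ∧
      (i ∉ J k → x k i = x (k - 1) i)) :
    Tendsto x atTop (nhds xstar) := by
  haveI : Nonempty (Fin n) := Fin.pos_iff_nonempty.mp hn
  set e : ℕ → ℝ := fun k => wnormC w (x k - xstar) with he
  have hgen : ∀ (y : Fin n → ℂ) (i : Fin n),
      ‖y i - xstar i‖ / w i ≤ wnormC w (y - xstar) := by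
    intro y i
    simpa [Pi.sub_apply] using le_wnormC w (y - xstar) i
  have hcomp : ∀ k i, ‖x k i - xstar i‖ / w i ≤ e k := fun k i => hgen (x k) i
  have heng : ∀ k, 0 ≤ e k := by
    intro k
    exact le_trans (div_nonneg (norm_nonneg _) (hw (Classical.arbitrary _)).le)
      (hcomp k (Classical.arbitrary _))
  -- (A) boundedness
  have hbound : ∀ k, e k ≤ e 0 := by
    intro k
    induction k using Nat.strong_induction_on with
    | _ k IH =>
      rcases Nat.eq_zero_or_pos k with rfl | hk
      · exact le_refl _
      · apply ciSup_le
        intro i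
        by_cases hi : i ∈ J k
        · rw [Pi.sub_apply, (hrec k hk i).1 hi]
          calc ‖T k (fun j => x (s j k) j) i - xstar i‖ / w i
              ≤ wnormC w (T k (fun j => x (s j k) j) - xstar) :=
                hgen _ i
            _ ≤ γ * wnormC w ((fun j => x (s j k) j) - xstar) :=
                hcontr k _
            _ ≤ γ * e 0 := by
                apply mul_le_mul_of_nonneg_left _ hγ0
                apply ciSup_le
                intro j
                have h1 : s j k < k := lt_of_le_of_lt (hs j k hk) (by omega)
                calc ‖((fun j => x (s j k) j) - xstar) j‖ / w j
                    = ‖x (s j k) j - xstar j‖ / w j := by simp [Pi.sub_apply]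
                  _ ≤ e (s j k) := hcomp _ j
                  _ ≤ e 0 := IH _ h1
            _ ≤ e 0 := mul_le_of_le_one_left (heng 0) hγ1.le
        · rw [Pi.sub_apply, (hrec k hk i).2 hi]
          exact le_trans (hcomp (k - 1) i) (IH (k - 1) (by omega))
  -- (B) levels
  have hB : ∀ m : ℕ, ∃ K : ℕ, ∀ k, K ≤ k → e k ≤ γ ^ m * e 0 := by
    intro m
    induction m with
    | zero => exact ⟨0, fun k _ => by simpa using hbound k⟩
    | succ m IH =>
      obtain ⟨K, hK⟩ := IH
      have hN : ∀ j : Fin n, ∃ N, ∀ k, N ≤ k → K ≤ s j k := by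
        intro j
        exact eventually_atTop.mp ((hstend j).eventually_ge_atTop K)
      choose N hNs using hN
      set K' : ℕ := max 1 (Finset.univ.sup N) with hK'
      have hK'1 : 1 ≤ K' := le_max_left _ _
      have hK'N : ∀ j, N j ≤ K' :=
        fun j => le_trans (Finset.le_sup (Finset.mem_univ j)) (le_max_right _ _)
      -- update at time k ≥ K' gives the improved bound on component i
      have hupd : ∀ k, K' ≤ k → ∀ i ∈ J k,
          ‖x k i - xstar i‖ / w i ≤ γ ^ (m + 1) * e 0 := by
        intro k hk i hi
        have hk1 : 1 ≤ k := le_trans hK'1 hk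
        rw [(hrec k hk1 i).1 hi]
        calc ‖T k (fun j => x (s j k) j) i - xstar i‖ / w i
            ≤ wnormC w (T k (fun j => x (s j k) j) - xstar) := hgen _ i
          _ ≤ γ * wnormC w ((fun j => x (s j k) j) - xstar) := hcontr k _
          _ ≤ γ * (γ ^ m * e 0) := by
              apply mul_le_mul_of_nonneg_left _ hγ0
              apply ciSup_le
              intro j
              have hsj : K ≤ s j k := hNs j k (le_trans (hK'N j) hk)
              calc ‖((fun j => x (s j k) j) - xstar) j‖ / w j
                  = ‖x (s j k) j - xstar j‖ / w j := by simp [Pi.sub_apply]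
                _ ≤ e (s j k) := hcomp _ j
                _ ≤ γ ^ m * e 0 := hK _ hsj
          _ = γ ^ (m + 1) * e 0 := by ring
      have hki : ∀ i : Fin n, ∃ ki : ℕ, K' ≤ ki ∧ ∀ k, ki ≤ k →
          ‖x k i - xstar i‖ / w i ≤ γ ^ (m + 1) * e 0 := by
        intro i
        obtain ⟨ki, hki1, hki2, hki3⟩ := hJ i K'
        refine ⟨ki, hki1, ?_⟩
        intro k hk
        induction k, hk using Nat.le_induction with
        | base => exact hupd ki hki1 i hki3
        | succ k hk IH2 =>
          by_cases h : i ∈ J (k + 1)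
          · exact hupd (k + 1) (by omega) i h
          · have := (hrec (k + 1) (by omega) i).2 h
            rw [this]
            simpa using IH2
      choose ki hki1 hki2 using hki
      refine ⟨Finset.univ.sup ki, ?_⟩
      intro k hk
      apply ciSup_le
      intro i
      have : ki i ≤ k := le_trans (Finset.le_sup (Finset.mem_univ i)) hk
      simpa [Pi.sub_apply] using hki2 i k this
  -- e tends to 0
  have hgeo : Tendsto (fun m => γ ^ m * e 0) atTop (nhds 0) := by
    simpa using (tendsto_pow_atTop_nhds_zero_of_lt_one hγ0 hγ1).mul_const (e 0)
  have hetend : Tendsto e atTop (nhds 0) := by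
    rw [Metric.tendsto_atTop]
    intro ε hε
    obtain ⟨m, hm⟩ := (hgeo.eventually (gt_mem_nhds hε)).exists
    obtain ⟨K, hK⟩ := hB m
    refine ⟨K, fun k hk => ?_⟩
    rw [Real.dist_eq, sub_zero, abs_of_nonneg (heng k)]
    exact lt_of_le_of_lt (hK k hk) hm
  -- conclude componentwise
  rw [tendsto_pi_nhds]
  intro i
  rw [tendsto_iff_norm_sub_tendsto_zero]
  apply squeeze_zero (fun k => norm_nonneg _) (g := fun k => e k * w i)
  · intro k
    exact (div_le_iff₀ (hw i)).mp (hcomp k i)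
  · simpa using hetend.mul_const (w i)
end

section
/- Let A be a complex n×n matrix and let α, β be real numbers. If λ ∈ ℂ is an eigenvalue of the 2n×2n block matrix T_{α,β} = [[(1+β)(I - αA), -βI], [I, 0]], then there exists an eigenvalue μ of A such that λ² - (1+β)(1 - αμ)λ + β = 0. -/
open Matrix

theorem second_order_richardson_eigenvalue_quadratic
    {n : ℕ} (A : Matrix (Fin n) (Fin n) ℂ) (α β : ℝ) (l : ℂ)
    (hl : l ∈ spectrum ℂ
      (Matrix.fromBlocks
        (((1 + β : ℝ) : ℂ) • ((1 : Matrix (Fin n) (Fin n) ℂ) - (α : ℂ) • A))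
        (-((β : ℝ) : ℂ) • (1 : Matrix (Fin n) (Fin n) ℂ))
        (1 : Matrix (Fin n) (Fin n) ℂ)
        (0 : Matrix (Fin n) (Fin n) ℂ))) :
    ∃ μ ∈ spectrum ℂ A,
      l ^ 2 - ((1 + β : ℝ) : ℂ) * (1 - (α : ℂ) * μ) * l + ((β : ℝ) : ℂ) = 0 := by
  set c1 : ℂ := ((1 + β : ℝ) : ℂ) with hc1
  set a : ℂ := (α : ℂ) with ha
  set b : ℂ := ((β : ℝ) : ℂ) with hb
  set T : Matrix (Fin n ⊕ Fin n) (Fin n ⊕ Fin n) ℂ :=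
    Matrix.fromBlocks (c1 • ((1 : Matrix (Fin n) (Fin n) ℂ) - a • A))
      ((-b) • (1 : Matrix (Fin n) (Fin n) ℂ)) 1 0 with hT
  rw [spectrum.mem_iff] at hl
  have hdet : ((algebraMap ℂ (Matrix (Fin n ⊕ Fin n) (Fin n ⊕ Fin n) ℂ) l) - T).det = 0 := by
    by_contra h
    exact hl ((Matrix.isUnit_iff_isUnit_det _).mpr (isUnit_iff_ne_zero.mpr h))
  obtain ⟨v, hv0, hv⟩ := (Matrix.exists_mulVec_eq_zero_iff).mpr hdet
  set x : Fin n → ℂ := v ∘ Sum.inl with hx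
  set y : Fin n → ℂ := v ∘ Sum.inr with hy
  have hsum : Sum.elim x y = v := Sum.elim_comp_inl_inr v
  have hv' : T.mulVec v = l • v := by
    rw [Algebra.algebraMap_eq_smul_one, Matrix.sub_mulVec, Matrix.smul_mulVec,
      Matrix.one_mulVec, sub_eq_zero] at hv
    exact hv.symm
  rw [← hsum, Matrix.fromBlocks_mulVec] at hv'
  have h1 : (c1 • ((1 : Matrix (Fin n) (Fin n) ℂ) - a • A)).mulVec x
      + ((-b) • (1 : Matrix (Fin n) (Fin n) ℂ)).mulVec y = l • x := by
    funext i
    have := congrFun hv' (Sum.inl i)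
    simpa using this
  have h2 : x = l • y := by
    funext i
    have := congrFun hv' (Sum.inr i)
    simpa [Matrix.mulVec_zero, Matrix.one_mulVec] using this
  have hyne : y ≠ 0 := by
    intro h
    apply hv0
    rw [← hsum, h2, h]
    ext (i | i) <;> simp
  -- key scalar equation
  have key : ∀ i, c1 * l * a * (A.mulVec y) i = (c1 * l - b - l ^ 2) * y i := by
    intro i
    rw [h2] at h1
    have := congrFun h1 i
    simp only [Matrix.smul_mulVec, Matrix.mulVec_smul, Matrix.sub_mulVec,
      Matrix.one_mulVec, Matrix.neg_mulVec, Pi.add_apply, Pi.smul_apply, Pi.sub_apply,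
      Pi.neg_apply, smul_eq_mul] at this
    linear_combination -this
  obtain ⟨i0, hi0⟩ : ∃ i, y i ≠ 0 := by
    by_contra h
    push_neg at h
    exact hyne (funext h)
  by_cases hc : c1 * l * a = 0
  · -- then c1*l - b - l^2 = 0 as well; any eigenvalue works
    have hd : c1 * l - b - l ^ 2 = 0 := by
      have := key i0
      rw [hc, zero_mul] at this
      exact (mul_eq_zero.mp this.symm).resolve_right hi0
    haveI : Nonempty (Fin n) := ⟨i0⟩
    haveI : Nontrivial (Matrix (Fin n) (Fin n) ℂ) := by
      refine ⟨1, 0, fun h => ?_⟩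
      have := congrFun (congrFun h i0) i0
      simp at this
    obtain ⟨μ, hμ⟩ := spectrum.nonempty_of_isAlgClosed_of_finiteDimensional ℂ A
    exact ⟨μ, hμ, by linear_combination μ * hc - hd⟩
  · set μ : ℂ := (c1 * l - b - l ^ 2) / (c1 * l * a) with hμdef
    have heig : A.mulVec y = μ • y := by
      funext i
      have := key i
      rw [hμdef, Pi.smul_apply, smul_eq_mul, div_mul_eq_mul_div, eq_div_iff hc]
      linear_combination this
    have hμspec : μ ∈ spectrum ℂ A := by
      rw [spectrum.mem_iff]
      intro hunit
      have hdet' : ((algebraMap ℂ (Matrix (Fin n) (Fin n) ℂ) μ) - A).det ≠ 0 :=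
        isUnit_iff_ne_zero.mp ((Matrix.isUnit_iff_isUnit_det _).mp hunit)
      apply hdet'
      rw [← Matrix.exists_mulVec_eq_zero_iff]
      refine ⟨y, hyne, ?_⟩
      rw [Algebra.algebraMap_eq_smul_one, Matrix.sub_mulVec, Matrix.smul_mulVec,
        Matrix.one_mulVec, heig, sub_self]
    have hcd : c1 * l * a * μ = c1 * l - b - l ^ 2 := by
      rw [hμdef]; exact mul_div_cancel₀ _ hc
    exact ⟨μ, hμspec, by linear_combination hcd⟩
end

section
/- Let A be a complex n×n matrix and let α, β be real numbers. If μ ∈ ℂ is an eigenvalue of A and λ ∈ ℂ satisfies λ² - (1+β)(1 - αμ)λ + β = 0, then λ is an eigenvalue of the 2n×2n block matrix T_{α,β} = [[(1+β)(I - αA), -βI], [I, 0]]. -/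
open Matrix

theorem second_order_richardson_quadratic_root_is_eigenvalue
    {n : ℕ} (A : Matrix (Fin n) (Fin n) ℂ) (α β : ℝ) (μ l : ℂ)
    (hμ : μ ∈ spectrum ℂ A)
    (hl : l ^ 2 - ((1 + β : ℝ) : ℂ) * (1 - (α : ℂ) * μ) * l + ((β : ℝ) : ℂ) = 0) :
    l ∈ spectrum ℂ
      (Matrix.fromBlocks
        (((1 + β : ℝ) : ℂ) • ((1 : Matrix (Fin n) (Fin n) ℂ) - (α : ℂ) • A))
        (-((β : ℝ) : ℂ) • (1 : Matrix (Fin n) (Fin n) ℂ))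
        (1 : Matrix (Fin n) (Fin n) ℂ)
        (0 : Matrix (Fin n) (Fin n) ℂ)) := by
  -- extract an eigenvector of A
  rw [spectrum.mem_iff, Matrix.isUnit_iff_isUnit_det, isUnit_iff_ne_zero, not_not,
    ← Matrix.exists_mulVec_eq_zero_iff] at hμ
  obtain ⟨v, hv, hAv⟩ := hμ
  have halg : ∀ {m : Type} [Fintype m] [DecidableEq m] (c : ℂ) (w : m → ℂ),
      (algebraMap ℂ (Matrix m m ℂ) c).mulVec w = c • w := by
    intro m _ _ c w
    funext i
    rw [Matrix.algebraMap_eq_diagonal, Matrix.mulVec_diagonal]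
    simp
  have hAv' : A.mulVec v = μ • v := by
    have h := hAv
    rw [Matrix.sub_mulVec, sub_eq_zero, halg] at h
    exact h.symm
  rw [spectrum.mem_iff, Matrix.isUnit_iff_isUnit_det, isUnit_iff_ne_zero, not_not,
    ← Matrix.exists_mulVec_eq_zero_iff]
  refine ⟨Sum.elim (l • v) v, fun h => hv ?_, ?_⟩
  · funext i; exact congrFun h (Sum.inr i)
  · rw [Matrix.sub_mulVec]
    rw [halg, Matrix.fromBlocks_mulVec]
    have h1 : (((1 + β : ℝ) : ℂ) • ((1 : Matrix (Fin n) (Fin n) ℂ) - (α : ℂ) • A)).mulVec (l • v)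
        + ((-((β : ℝ) : ℂ)) • (1 : Matrix (Fin n) (Fin n) ℂ)).mulVec v = (l * l) • v := by
      rw [Matrix.smul_mulVec, Matrix.smul_mulVec, Matrix.one_mulVec,
        Matrix.sub_mulVec, Matrix.one_mulVec, Matrix.smul_mulVec,
        Matrix.mulVec_smul, hAv']
      have : l * l = ((1 + β : ℝ) : ℂ) * (1 - (α : ℂ) * μ) * l - ((β : ℝ) : ℂ) := by
        have := hl; ring_nf at this ⊢; linear_combination this
      rw [this]
      funext i
      simp [Pi.smul_apply, smul_eq_mul]
      ring
    have h2 : (1 : Matrix (Fin n) (Fin n) ℂ).mulVec (l • v)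
        + (0 : Matrix (Fin n) (Fin n) ℂ).mulVec v = l • v := by
      rw [Matrix.one_mulVec, Matrix.zero_mulVec, add_zero]
    simp only [Sum.elim_comp_inl, Sum.elim_comp_inr]
    rw [h1, h2]
    funext i
    cases i <;> simp [Pi.smul_apply, smul_eq_mul] <;> ring
end

section
/- Let a and b be real numbers with 0 < a < b, set q = (√b - √a)/(√b + √a), α = 2/(a+b), and β = q². Then for every real μ ∈ [a, b] and every complex number λ satisfying λ² - (1+β)(1 - αμ)λ + β = 0, one has |λ| = q. -/
set_option maxHeartbeats 1000000 in

theorem frankel_optimal_parameters_root_modulus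
    (a b q α β : ℝ) (ha : 0 < a) (hab : a < b)
    (hq : q = (Real.sqrt b - Real.sqrt a) / (Real.sqrt b + Real.sqrt a))
    (hα : α = 2 / (a + b)) (hβ : β = q ^ 2) :
    ∀ μ : ℝ, μ ∈ Set.Icc a b → ∀ l : ℂ,
      l ^ 2 - ((1 + β : ℝ) : ℂ) * (1 - (α : ℂ) * (μ : ℂ)) * l + ((β : ℝ) : ℂ) = 0 →
      ‖l‖ = q := by
  intro μ hμ l hl
  obtain ⟨hμa, hμb⟩ := hμ
  set s := Real.sqrt a with hs'
  set t := Real.sqrt b with ht'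
  have hb : 0 < b := ha.trans hab
  have hs : 0 < s := Real.sqrt_pos.mpr ha
  have ht : 0 < t := Real.sqrt_pos.mpr hb
  have hst : s < t := Real.sqrt_lt_sqrt ha.le hab
  have has : s ^ 2 = a := Real.sq_sqrt ha.le
  have hbt : t ^ 2 = b := Real.sq_sqrt hb.le
  have hq' : q * (t + s) = t - s := by
    rw [hq]; field_simp
  have hq0 : 0 ≤ q := by
    nlinarith [hq']
  have hab0 : 0 < a + b := by linarith
  set c : ℝ := (1 + β) * (1 - α * μ) with hc
  have hαab : α * (a + b) = 2 := by rw [hα]; field_simp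
  -- key identity: (1 + q^2) * (b - a) = 2 * q * (a + b)
  have hkey : (1 + q ^ 2) * (b - a) = 2 * q * (a + b) := by
    have h : (1 + q ^ 2) * (t ^ 2 - s ^ 2) = 2 * q * (t ^ 2 + s ^ 2) := by
      linear_combination (q * (t - s) - (t + s)) * hq'
    rw [has, hbt] at h
    linarith [h]
  have hd : c ^ 2 ≤ 4 * β := by
    have h1 : c * (a + b) = (1 + q ^ 2) * (a + b - 2 * μ) := by
      rw [hc, hβ]; linear_combination (-(1 + q ^ 2) * μ) * hαab
    have h2 : (a + b - 2 * μ) ^ 2 ≤ (b - a) ^ 2 := by nlinarith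
    have h3 : (c * (a + b)) ^ 2 ≤ (2 * q * (a + b)) ^ 2 := by
      rw [h1, ← hkey]
      have hqq : (0:ℝ) ≤ (1 + q ^ 2) ^ 2 := by positivity
      calc ((1 + q ^ 2) * (a + b - 2 * μ)) ^ 2
          = (1 + q ^ 2) ^ 2 * (a + b - 2 * μ) ^ 2 := by ring
        _ ≤ (1 + q ^ 2) ^ 2 * (b - a) ^ 2 := by nlinarith
        _ = ((1 + q ^ 2) * (b - a)) ^ 2 := by ring
    rw [hβ]
    have hab2 : (0:ℝ) < (a + b) ^ 2 := by positivity
    have h3' : c ^ 2 * (a + b) ^ 2 ≤ 4 * q ^ 2 * (a + b) ^ 2 := by nlinarith [h3]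
    exact le_of_mul_le_mul_right h3' hab2
  -- extract real and imaginary parts
  set x := l.re with hx
  set y := l.im with hy
  have hre := congrArg Complex.re hl
  have him := congrArg Complex.im hl
  simp [Complex.ext_iff, pow_two, Complex.add_re, Complex.add_im, Complex.sub_re,
    Complex.sub_im, Complex.mul_re, Complex.mul_im, Complex.ofReal_re,
    Complex.ofReal_im, Complex.one_re, Complex.one_im] at hre him
  have hnorm : ‖l‖ ^ 2 = x ^ 2 + y ^ 2 := by
    rw [Complex.sq_norm, Complex.normSq_apply]; ring
  have hsum : x ^ 2 + y ^ 2 = q ^ 2 := by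
    have him' : y * (2 * x - c) = 0 := by rw [hc]; nlinarith [him]
    have hre' : x ^ 2 - y ^ 2 - c * x + β = 0 := by rw [hc]; nlinarith [hre]
    rcases mul_eq_zero.mp him' with h0 | h0
    · -- y = 0
      rw [h0] at hre' ⊢
      rw [← hβ] at *
      nlinarith [sq_nonneg (2 * x - c), hre', hd]
    · -- 2x = c
      rw [← hβ] at *
      linear_combination (-1 : ℝ) * hre' + x * h0
  have : ‖l‖ ^ 2 = q ^ 2 := by rw [hnorm, hsum]
  nlinarith [this, norm_nonneg l, hq0, sq_nonneg (‖l‖ - q), sq_nonneg (‖l‖ + q)]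
end

section
/- Let a and b be real numbers with 0 < a < b, and let A be a complex n×n matrix (n ≥ 1) whose spectrum is nonempty and contained in the real interval [a, b]. Set q = (√b - √a)/(√b + √a), α = 2/(a+b), and β = q². Then the spectral radius of the 2n×2n block matrix T_{α,β} = [[(1+β)(I - αA), -βI], [I, 0]] equals q. -/
open Matrix

lemma mem_spectrum_iff_det' {m : Type*} [Fintype m] [DecidableEq m] (M : Matrix m m ℂ) (z : ℂ) :
    z ∈ spectrum ℂ M ↔ (z • (1 : Matrix m m ℂ) - M).det = 0 := by
  rw [spectrum.mem_iff, Matrix.isUnit_iff_isUnit_det, isUnit_iff_ne_zero, not_not,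
    Algebra.algebraMap_eq_smul_one]

lemma norm_root_quadratic (z : ℂ) (c q : ℝ) (hq : 0 ≤ q) (hc : |c| ≤ 2*q)
    (h : z^2 - (c:ℂ)*z + (q:ℂ)^2 = 0) : ‖z‖ = q := by
  set x := z.re with hxd
  set y := z.im with hyd
  have h1 : x^2 - y^2 - c*x + q^2 = 0 := by
    have := congrArg Complex.re h
    simp [pow_two, Complex.mul_re, Complex.add_re, Complex.sub_re] at this
    linarith
  have h2 : 2*x*y - c*y = 0 := by
    have := congrArg Complex.im h
    simp [pow_two, Complex.mul_im, Complex.add_im, Complex.sub_im] at this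
    linarith
  have hc2 : c^2 ≤ 4*q^2 := by nlinarith [sq_abs c, abs_nonneg c]
  have hsq : x^2 + y^2 = q^2 := by
    rcases eq_or_ne y 0 with h0 | h0
    · rw [h0] at h1 ⊢
      have ht : (2*x - c)^2 = 0 := by nlinarith
      have ht' : 2*x - c = 0 := by
        have := sq_eq_zero_iff.mp ht
        linarith [this]
      nlinarith
    · have hcx : c = 2*x := by
        have : y * (2*x - c) = 0 := by ring_nf; linarith [h2]
        rcases mul_eq_zero.mp this with h | h
        · exact absurd h h0
        · linarith
      rw [hcx] at h1
      nlinarith [h1, sq_nonneg x]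
  have hn2 : ‖z‖^2 = q^2 := by
    rw [Complex.sq_norm, Complex.normSq_apply]
    nlinarith [hsq]
  calc ‖z‖ = Real.sqrt (‖z‖^2) := (Real.sqrt_sq (norm_nonneg z)).symm
    _ = Real.sqrt (q^2) := by rw [hn2]
    _ = q := Real.sqrt_sq hq

lemma mem_spec_blocks_iff {n : ℕ} (A : Matrix (Fin n) (Fin n) ℂ) (b c z : ℂ)
    (hz : z ≠ 0) (hb : 1 + b ≠ 0) (hc : c ≠ 0) :
    z ∈ spectrum ℂ (Matrix.fromBlocks
        ((1+b) • ((1 : Matrix (Fin n) (Fin n) ℂ) - c • A))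
        (-b • (1 : Matrix (Fin n) (Fin n) ℂ))
        (1 : Matrix (Fin n) (Fin n) ℂ) (0 : Matrix (Fin n) (Fin n) ℂ))
      ↔ (-(z^2 - (1+b)*z + b)/((1+b)*c*z)) ∈ spectrum ℂ A := by
  rw [mem_spectrum_iff_det', mem_spectrum_iff_det']
  have h1 : z • (1 : Matrix (Fin n ⊕ Fin n) (Fin n ⊕ Fin n) ℂ) -
      Matrix.fromBlocks ((1+b) • ((1 : Matrix (Fin n) (Fin n) ℂ) - c • A))
        (-b • (1 : Matrix (Fin n) (Fin n) ℂ)) 1 0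
      = Matrix.fromBlocks (z • 1 - (1+b) • ((1 : Matrix (Fin n) (Fin n) ℂ) - c • A))
        (b • 1) (-1) (z • (1 : Matrix (Fin n) (Fin n) ℂ)) := by
    rw [← fromBlocks_one, fromBlocks_smul, sub_eq_add_neg, fromBlocks_neg, fromBlocks_add]
    simp [sub_eq_add_neg]
  rw [h1]
  letI : Invertible (z • (1 : Matrix (Fin n) (Fin n) ℂ)) :=
    ⟨z⁻¹ • 1, by simp [Matrix.smul_mul, Matrix.mul_smul, smul_smul, inv_mul_cancel₀ hz,
        mul_inv_cancel₀ hz],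
      by simp [Matrix.smul_mul, Matrix.mul_smul, smul_smul, inv_mul_cancel₀ hz,
        mul_inv_cancel₀ hz]⟩
  rw [Matrix.det_fromBlocks₂₂]
  have hinv : ⅟(z • (1 : Matrix (Fin n) (Fin n) ℂ)) = z⁻¹ • (1 : Matrix (Fin n) (Fin n) ℂ) := rfl
  rw [hinv]
  have hX : (z • (1 : Matrix (Fin n) (Fin n) ℂ) - (1+b) • ((1 : Matrix (Fin n) (Fin n) ℂ) - c • A))
        - (b • (1 : Matrix (Fin n) (Fin n) ℂ)) * (z⁻¹ • (1 : Matrix (Fin n) (Fin n) ℂ)) * (-1)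
      = (-((1+b)*c)) • ((-(z^2 - (1+b)*z + b)/((1+b)*c*z)) • (1 : Matrix (Fin n) (Fin n) ℂ) - A) := by
    have hprod : (b • (1 : Matrix (Fin n) (Fin n) ℂ)) * (z⁻¹ • (1 : Matrix (Fin n) (Fin n) ℂ)) * (-1)
        = (-(b*z⁻¹)) • (1 : Matrix (Fin n) (Fin n) ℂ) := by
      simp [Matrix.smul_mul, Matrix.mul_smul, smul_smul, Matrix.mul_neg, neg_smul, mul_comm]
    rw [hprod]
    match_scalars
    · field_simp
      ring
    · field_simp
  rw [hX, Matrix.det_smul, Matrix.det_smul, Matrix.det_one, mul_one]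
  have hzn : z ^ (Fintype.card (Fin n)) ≠ 0 := pow_ne_zero _ hz
  have hwn : (-((1+b)*c)) ^ (Fintype.card (Fin n)) ≠ 0 :=
    pow_ne_zero _ (by simp [hb, hc])
  constructor
  · intro h
    rcases mul_eq_zero.mp h with h | h
    · exact absurd h hzn
    · rcases mul_eq_zero.mp h with h | h
      · exact absurd h hwn
      · exact h
  · intro h
    rw [h, mul_zero, mul_zero]

theorem second_order_richardson_optimal_spectral_radius
    {n : ℕ} (hn : 1 ≤ n) (A : Matrix (Fin n) (Fin n) ℂ)
    (a b q α β : ℝ) (ha : 0 < a) (hab : a < b)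
    (hspec_ne : (spectrum ℂ A).Nonempty)
    (hspec : ∀ μ ∈ spectrum ℂ A, ∃ r : ℝ, μ = (r : ℂ) ∧ r ∈ Set.Icc a b)
    (hq : q = (Real.sqrt b - Real.sqrt a) / (Real.sqrt b + Real.sqrt a))
    (hα : α = 2 / (a + b)) (hβ : β = q ^ 2) :
    specRad
      (Matrix.fromBlocks
        (((1 + β : ℝ) : ℂ) • ((1 : Matrix (Fin n) (Fin n) ℂ) - (α : ℂ) • A))
        (-((β : ℝ) : ℂ) • (1 : Matrix (Fin n) (Fin n) ℂ))
        (1 : Matrix (Fin n) (Fin n) ℂ)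
        (0 : Matrix (Fin n) (Fin n) ℂ)) = q := by
  have hb0 : 0 < b := ha.trans hab
  set sa := Real.sqrt a with hsad
  set sb := Real.sqrt b with hsbd
  have hsa : 0 < sa := Real.sqrt_pos.mpr ha
  have hsb : sa < sb := Real.sqrt_lt_sqrt ha.le hab
  have hsa2 : sa^2 = a := Real.sq_sqrt ha.le
  have hsb2 : sb^2 = b := Real.sq_sqrt hb0.le
  have hq0 : 0 < q := by rw [hq]; exact div_pos (by linarith) (by linarith)
  have hβpos : 0 < β := by rw [hβ]; positivity
  have h1β : (0:ℝ) < 1 + β := by linarith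
  have hab0 : 0 < a + b := by linarith
  have hα0 : 0 < α := by rw [hα]; positivity
  have hbC : (1 : ℂ) + (β:ℂ) ≠ 0 := by
    have h : ((1 + β : ℝ) : ℂ) ≠ 0 := by exact_mod_cast ne_of_gt h1β
    push_cast at h; exact h
  have hcC : ((α:ℝ):ℂ) ≠ 0 := by exact_mod_cast ne_of_gt hα0
  have hβC : ((β:ℝ):ℂ) ≠ 0 := by exact_mod_cast ne_of_gt hβpos
  -- the shared bound on the middle coefficient
  have habsr : ∀ r : ℝ, a ≤ r → r ≤ b → |(1+β)*(1-α*r)| ≤ 2*q := by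
    intro r hra hrb
    have h1r : 1 - α*r = ((a+b) - 2*r)/(a+b) := by
      rw [hα]; field_simp
    have habs1 : |1 - α*r| ≤ (b-a)/(a+b) := by
      rw [h1r, abs_div, abs_of_pos hab0]
      gcongr
      exact abs_le.mpr ⟨by linarith, by linarith⟩
    have heq2 : (1+β)*((b-a)/(a+b)) = 2*q := by
      rw [hβ, hq, ← hsa2, ← hsb2]
      have h1 : sb + sa ≠ 0 := by positivity
      have h2 : sa^2 + sb^2 ≠ 0 := by positivity
      field_simp
      ring
    rw [abs_mul, abs_of_pos h1β]
    calc (1+β) * |1-α*r| ≤ (1+β) * ((b-a)/(a+b)) :=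
          mul_le_mul_of_nonneg_left habs1 h1β.le
      _ = 2*q := heq2
  rw [show (((1 + β : ℝ)) : ℂ) = 1 + (β:ℂ) from by push_cast; ring]
  set T := Matrix.fromBlocks ((1 + (β:ℂ)) • ((1 : Matrix (Fin n) (Fin n) ℂ) - (α:ℂ) • A))
    (-((β:ℝ):ℂ) • (1 : Matrix (Fin n) (Fin n) ℂ)) (1 : Matrix (Fin n) (Fin n) ℂ)
    (0 : Matrix (Fin n) (Fin n) ℂ) with hT
  -- zero is not in the spectrum of T
  have h0T : (0:ℂ) ∉ spectrum ℂ T := by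
    rw [mem_spectrum_iff_det']
    intro hdet
    rw [zero_smul, zero_sub, Matrix.det_neg] at hdet
    have hdT : T.det = 0 := by
      rcases mul_eq_zero.mp hdet with h | h
      · exact absurd h (pow_ne_zero _ (by norm_num))
      · exact h
    have hmul : T * Matrix.fromBlocks (0 : Matrix (Fin n) (Fin n) ℂ) 1 1 0
        = Matrix.fromBlocks (-((β:ℝ):ℂ) • 1)
            ((1 + (β:ℂ)) • ((1 : Matrix (Fin n) (Fin n) ℂ) - (α:ℂ) • A)) 0 1 := by
      rw [hT, fromBlocks_multiply]
      simp
    have hd2 := congrArg Matrix.det hmul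
    rw [Matrix.det_mul, hdT, zero_mul, Matrix.det_fromBlocks_zero₂₁, Matrix.det_smul,
      Matrix.det_one, mul_one] at hd2
    rw [mul_one] at hd2
    exact absurd hd2.symm (pow_ne_zero _ (neg_ne_zero.mpr hβC))
  -- all eigenvalues of T have modulus q
  have key : ∀ z ∈ spectrum ℂ T, ‖z‖ = q := by
    intro z hzT
    have hz : z ≠ 0 := fun h => h0T (h ▸ hzT)
    rw [hT, mem_spec_blocks_iff A (β:ℂ) (α:ℂ) z hz hbC hcC] at hzT
    obtain ⟨r, hre, hrIcc⟩ := hspec _ hzT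
    have hden : (1+(β:ℂ))*((α:ℝ):ℂ)*z ≠ 0 := mul_ne_zero (mul_ne_zero hbC hcC) hz
    rw [div_eq_iff hden] at hre
    have hzq : z^2 - (((1+β)*(1-α*r) : ℝ) : ℂ) * z + ((q:ℝ):ℂ)^2 = 0 := by
      push_cast [hβ] at hre ⊢
      linear_combination -hre
    exact norm_root_quadratic z _ q hq0.le (habsr r hrIcc.1 hrIcc.2) hzq
  -- construct an eigenvalue of T
  obtain ⟨μ₀, hμ₀⟩ := hspec_ne
  obtain ⟨r, hre, hrIcc⟩ := hspec μ₀ hμ₀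
  set c₀ := (1+β)*(1-α*r) with hc₀
  have hcabs := habsr r hrIcc.1 hrIcc.2
  have hc2 : c₀^2 ≤ 4*β := by
    rw [hβ]; nlinarith [abs_nonneg c₀, sq_abs c₀]
  set s := Real.sqrt (4*β - c₀^2) with hs
  have hs2 : s^2 = 4*β - c₀^2 := Real.sq_sqrt (by linarith)
  set z₀ : ℂ := ((c₀/2 : ℝ) : ℂ) + ((s/2 : ℝ) : ℂ) * Complex.I with hz₀d
  have hquad : z₀^2 - ((c₀:ℝ):ℂ)*z₀ + ((β:ℝ):ℂ) = 0 := by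
    rw [Complex.ext_iff]
    constructor
    · simp [hz₀d, pow_two, Complex.mul_re, Complex.mul_im, Complex.add_re, Complex.add_im,
        Complex.sub_re, Complex.sub_im]
      nlinarith [hs2]
    · simp [hz₀d, pow_two, Complex.mul_re, Complex.mul_im, Complex.add_re, Complex.add_im,
        Complex.sub_re, Complex.sub_im]
      ring
  have hz0ne : z₀ ≠ 0 := by
    intro h
    rw [h] at hquad
    simp at hquad
    exact absurd hquad (by exact_mod_cast ne_of_gt hβpos)
  have hmem : z₀ ∈ spectrum ℂ T := by
    rw [hT, mem_spec_blocks_iff A (β:ℂ) (α:ℂ) z₀ hz0ne hbC hcC]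
    have hden : (1+(β:ℂ))*((α:ℝ):ℂ)*z₀ ≠ 0 := mul_ne_zero (mul_ne_zero hbC hcC) hz0ne
    have heq : (-(z₀^2 - (1+(β:ℂ))*z₀ + ((β:ℝ):ℂ))/((1+(β:ℂ))*((α:ℝ):ℂ)*z₀)) = μ₀ := by
      rw [hre, div_eq_iff hden]
      push_cast [hc₀] at hquad ⊢
      linear_combination -hquad
    rw [heq]
    exact hμ₀
  -- conclude
  have himg : (fun z : ℂ => ‖z‖) '' spectrum ℂ T = {q} := by
    apply Set.eq_singleton_iff_unique_mem.mpr
    constructor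
    · exact ⟨z₀, hmem, key z₀ hmem⟩
    · rintro x ⟨w, hw, rfl⟩
      exact key w hw
  rw [specRad, himg, csSup_singleton]
end

section
/- Let A be a real symmetric positive definite n×n matrix whose eigenvalues all lie in [a, b] with 0 < a < b, let c ∈ ℝⁿ, and let x* = A⁻¹c. Set q = (√b - √a)/(√b + √a), α = 2/(a+b), and β = q². Define the sequence (x^k) by: x⁰ ∈ ℝⁿ arbitrary, x¹ = x⁰ + α(c - Ax⁰), and x^{k+1} = x^k + β(x^k - x^{k-1}) + (1+β)α(c - Ax^k) for k ≥ 1. Then for every k ≥ 0, ‖x^k - x*‖₂ ≤ q^k (1 + k(1 - q²)/(1 + q²)) ‖x⁰ - x*‖₂. -/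
lemma abs_sin_nat_mul_le (θ : ℝ) : ∀ k : ℕ, |Real.sin (k * θ)| ≤ k * |Real.sin θ| := by
  intro k
  induction k with
  | zero => simp
  | succ k ih =>
    have h : Real.sin (((k : ℝ) + 1) * θ)
        = Real.sin ((k : ℝ) * θ) * Real.cos θ + Real.cos ((k : ℝ) * θ) * Real.sin θ := by
      rw [add_mul, one_mul, Real.sin_add]
    push_cast
    rw [h]
    have h1 : |Real.sin ((k:ℝ)*θ) * Real.cos θ + Real.cos ((k:ℝ)*θ) * Real.sin θ|
        ≤ |Real.sin ((k:ℝ)*θ)| * |Real.cos θ| + |Real.cos ((k:ℝ)*θ)| * |Real.sin θ| := by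
      simpa [abs_mul] using abs_add_le (Real.sin ((k:ℝ)*θ) * Real.cos θ) (Real.cos ((k:ℝ)*θ) * Real.sin θ)
    have h2 := Real.abs_cos_le_one ((k:ℝ)*θ)
    have h3 := Real.abs_cos_le_one θ
    have h4 := abs_nonneg (Real.sin ((k:ℝ)*θ))
    have h5 := abs_nonneg (Real.sin θ)
    nlinarith

lemma scalar_bound (q m : ℝ) (hq0 : 0 < q) (hq1 : q < 1)
    (hm : |m| ≤ 2*q/(1+q^2)) (t : ℕ → ℝ)
    (h1 : t 1 = m * t 0)
    (hr : ∀ k : ℕ, t (k+2) = (1+q^2)*m*t (k+1) - q^2 * t k) :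
    ∀ k : ℕ, |t k| ≤ q^k * (1 + k*(1-q^2)/(1+q^2)) * |t 0| := by
  have hq2 : (0:ℝ) < 1 + q^2 := by positivity
  have h2q : (0:ℝ) < 2*q := by linarith
  have h2q' : (2*q) ≠ 0 := ne_of_gt h2q
  have hγ0 : (0:ℝ) ≤ (1-q^2)/(1+q^2) := div_nonneg (by nlinarith) hq2.le
  obtain ⟨hm1, hm2⟩ := abs_le.mp hm
  have hma : (1+q^2)*m ≤ 2*q := by nlinarith [(le_div_iff₀ hq2).mp hm2]
  have hmb : -(2*q) ≤ (1+q^2)*m := by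
    have : (-(2*q))/(1+q^2) ≤ m := by rw [neg_div]; exact hm1
    nlinarith [(div_le_iff₀ hq2).mp this]
  obtain ⟨x, hm''⟩ : ∃ x : ℝ, (1+q^2)*m = 2*q*x :=
    ⟨(1+q^2)*m/(2*q), by field_simp⟩
  have hxa : -1 ≤ x := by nlinarith
  have hxb : x ≤ 1 := by nlinarith
  have hcos : Real.cos (Real.arccos x) = x := Real.cos_arccos hxa hxb
  set θ : ℝ := Real.arccos x with hθdef
  intro k
  by_cases hs : Real.sin θ = 0
  · -- boundary case: x² = 1
    have hx2 : x^2 = 1 := by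
      have h := Real.sin_sq_add_cos_sq θ
      rw [hs, hcos] at h; nlinarith
    have key : ∀ j : ℕ,
        t j = q^j * x^j * (1 + (j:ℝ)*(1-q^2)/(1+q^2)) * t 0 ∧
        t (j+1) = q^(j+1) * x^(j+1) * (1 + ((j:ℝ)+1)*(1-q^2)/(1+q^2)) * t 0 := by
      intro j
      induction j with
      | zero =>
        constructor
        · push_cast; ring_nf
        · rw [h1]; push_cast
          field_simp
          linear_combination (t 0) * hm''
      | succ j ih =>
        obtain ⟨ih1, ih2⟩ := ih
        push_cast at ih1 ih2 ⊢
        constructor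
        · exact ih2
        · simp only [show j+1+1 = j+2 from rfl]
          rw [hr j, ih1, ih2]
          linear_combination (q^(j+1)*x^(j+1)*(1+((j:ℝ)+1)*(1-q^2)/(1+q^2))*t 0) * hm''
            + (q^(j+2)*(1+(j:ℝ)*(1-q^2)/(1+q^2))*x^j*t 0) * hx2
    have hxabs : |x| = 1 := by
      have := sq_abs x
      nlinarith [abs_nonneg x]
    have hpos : (0:ℝ) ≤ 1 + (k:ℝ)*(1-q^2)/(1+q^2) := by
      have : (0:ℝ) ≤ (k:ℝ)*(1-q^2)/(1+q^2) :=
        div_nonneg (mul_nonneg (Nat.cast_nonneg k) (by nlinarith)) hq2.le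
      linarith
    refine le_of_eq ?_
    rw [(key k).1, abs_mul, abs_mul, abs_mul, abs_pow, abs_pow, hxabs,
      abs_of_pos hq0, abs_of_nonneg hpos, one_pow, mul_one]
  · -- interior case: trigonometric closed form
    have key : ∀ j : ℕ,
        (t j * Real.sin θ
          = q^j * (Real.cos ((j:ℝ)*θ) * Real.sin θ
            + (1-q^2)/(1+q^2) * x * Real.sin ((j:ℝ)*θ)) * t 0) ∧
        (t (j+1) * Real.sin θ
          = q^(j+1) * (Real.cos (((j:ℝ)+1)*θ) * Real.sin θ
            + (1-q^2)/(1+q^2) * x * Real.sin (((j:ℝ)+1)*θ)) * t 0) := by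
      intro j
      induction j with
      | zero =>
        constructor
        · norm_num [mul_comm]
        · rw [h1]
          push_cast
          simp only [zero_add, one_mul, pow_one, hcos]
          field_simp
          linear_combination (t 0) * hm''
      | succ j ih =>
        obtain ⟨ih1, ih2⟩ := ih
        push_cast at ih1 ih2 ⊢
        constructor
        · exact ih2
        · have hc : Real.cos (((j:ℝ)+1+1)*θ)
              = 2*x*Real.cos (((j:ℝ)+1)*θ) - Real.cos ((j:ℝ)*θ) := by
            have e1 : ((j:ℝ)+1+1)*θ = ((j:ℝ)+1)*θ + θ := by ring
            have e2 : (j:ℝ)*θ = ((j:ℝ)+1)*θ - θ := by ring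
            rw [e1, e2, Real.cos_add, Real.cos_sub, hcos]; ring
          have hsn : Real.sin (((j:ℝ)+1+1)*θ)
              = 2*x*Real.sin (((j:ℝ)+1)*θ) - Real.sin ((j:ℝ)*θ) := by
            have e1 : ((j:ℝ)+1+1)*θ = ((j:ℝ)+1)*θ + θ := by ring
            have e2 : (j:ℝ)*θ = ((j:ℝ)+1)*θ - θ := by ring
            rw [e1, e2, Real.sin_add, Real.sin_sub, hcos]; ring
          simp only [show j+1+1 = j+2 from rfl]
          rw [hr j, hc, hsn]
          linear_combination (Real.sin θ * t (j+1)) * hm'' + (2*q*x) * ih2 - q^2 * ih1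
    have hks := abs_sin_nat_mul_le θ k
    have hcb := Real.abs_cos_le_one ((k:ℝ)*θ)
    have hsa := abs_nonneg (Real.sin ((k:ℝ)*θ))
    have hsb := abs_nonneg (Real.sin θ)
    have hs0 : 0 < |Real.sin θ| := abs_pos.mpr hs
    set C := Real.cos ((k:ℝ)*θ)
    set S := Real.sin ((k:ℝ)*θ)
    set s := Real.sin θ
    set γ := (1-q^2)/(1+q^2) with hγdef
    have h6 : |C*s + γ*x*S| ≤ |C*s| + |γ*x*S| := abs_add_le _ _
    have e2 : |C*s| = |C| * |s| := abs_mul _ _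
    have e3 : |γ*x*S| = γ*|x| * |S| := by
      rw [abs_mul, abs_mul, abs_of_nonneg hγ0]
    have hx1 : |x| ≤ 1 := abs_le.mpr ⟨hxa, hxb⟩
    have e4 : |x| * |S| ≤ 1*((k:ℝ)*|s|) := mul_le_mul hx1 hks hsa zero_le_one
    have e5 : γ * (|x| * |S|) ≤ γ*(1*((k:ℝ)*|s|)) := mul_le_mul_of_nonneg_left e4 hγ0
    have hin : |C*s + γ*x*S| ≤ |s| + γ*((k:ℝ)*|s|) := by
      have : |C| * |s| ≤ 1*|s| := mul_le_mul_of_nonneg_right hcb hsb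
      rw [e2, e3] at h6
      nlinarith
    have e1 : |t k * s| = q^k * |C*s + γ*x*S| * |t 0| := by
      rw [(key k).1, abs_mul, abs_mul, abs_of_nonneg (pow_nonneg hq0.le k)]
    have hb : |t k| * |s| ≤ (q^k * (1 + (k:ℝ)*(1-q^2)/(1+q^2)) * |t 0|) * |s| := by
      rw [← abs_mul, e1]
      calc q^k * |C*s + γ*x*S| * |t 0|
          ≤ q^k * (|s| + γ*((k:ℝ)*|s|)) * |t 0| := by
            have h7 := mul_le_mul_of_nonneg_left hin (pow_nonneg hq0.le k)
            exact mul_le_mul_of_nonneg_right h7 (abs_nonneg _)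
        _ = (q^k * (1 + (k:ℝ)*γ) * |t 0|) * |s| := by ring
        _ = (q^k * (1 + (k:ℝ)*(1-q^2)/(1+q^2)) * |t 0|) * |s| := by
            rw [hγdef, mul_div_assoc]
    exact le_of_mul_le_mul_right hb hs0

open Matrix

/-- The Euclidean norm on ℝⁿ. -/
noncomputable def enorm₂ {n : ℕ} (v : Fin n → ℝ) : ℝ :=
  Real.sqrt (∑ i, (v i) ^ 2)

theorem second_order_richardson_error_bound
    {n : ℕ} (A : Matrix (Fin n) (Fin n) ℝ)
    (hsymm : A.IsSymm) (hpd : A.PosDef)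
    (a b q α β : ℝ) (ha : 0 < a) (hab : a < b)
    (hspec : ∀ μ ∈ spectrum ℝ A, μ ∈ Set.Icc a b)
    (hq : q = (Real.sqrt b - Real.sqrt a) / (Real.sqrt b + Real.sqrt a))
    (hα : α = 2 / (a + b)) (hβ : β = q ^ 2)
    (c : Fin n → ℝ) (xstar : Fin n → ℝ) (hxstar : xstar = A⁻¹.mulVec c)
    (x : ℕ → Fin n → ℝ)
    (hx1 : x 1 = x 0 + α • (c - A.mulVec (x 0)))
    (hrec : ∀ k : ℕ, 1 ≤ k →
      x (k + 1) = x k + β • (x k - x (k - 1)) + ((1 + β) * α) • (c - A.mulVec (x k))) :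
    ∀ k : ℕ, enorm₂ (x k - xstar)
      ≤ q ^ k * (1 + (k : ℝ) * (1 - q ^ 2) / (1 + q ^ 2)) * enorm₂ (x 0 - xstar) := by
  -- basic facts about q
  have hsa0 : 0 < Real.sqrt a := Real.sqrt_pos.mpr ha
  have hsb0 : 0 < Real.sqrt b := Real.sqrt_pos.mpr (ha.trans hab)
  have hsab : Real.sqrt a < Real.sqrt b := Real.sqrt_lt_sqrt ha.le hab
  have hsum : 0 < Real.sqrt b + Real.sqrt a := by linarith
  have hq0 : 0 < q := by rw [hq]; exact div_pos (by linarith) hsum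
  have hq1 : q < 1 := by rw [hq, div_lt_one hsum]; linarith
  have hq2 : (0:ℝ) < 1 + q^2 := by positivity
  have hab0 : (0:ℝ) < a + b := by linarith
  have hsa : Real.sqrt a ^ 2 = a := Real.sq_sqrt ha.le
  have hsb : Real.sqrt b ^ 2 = b := Real.sq_sqrt (ha.trans hab).le
  -- the key algebraic identity 2q/(1+q²) = (b-a)/(a+b)
  have hqid : 2*q/(1+q^2) = (b-a)/(a+b) := by
    have key : ∀ sa sb : ℝ, 0 < sa → sa < sb →
        2*((sb-sa)/(sb+sa))/(1+((sb-sa)/(sb+sa))^2) = (sb^2-sa^2)/(sa^2+sb^2) := by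
      intro sa sb h0 hlt
      have h1 : sb + sa ≠ 0 := by intro h; nlinarith
      have h2 : sa^2 + sb^2 ≠ 0 := by nlinarith
      have h3 : (0:ℝ) < 1 + ((sb - sa) / (sb + sa)) ^ 2 := by positivity
      have h4 : (0:ℝ) < sa^2 + sb^2 := by nlinarith
      rw [div_eq_div_iff (ne_of_gt h3) (ne_of_gt h4)]
      field_simp
      ring
    have := key (Real.sqrt a) (Real.sqrt b) hsa0 hsab
    rw [hsa, hsb] at this
    rw [hq]
    exact this
  -- matrix setup
  have hA : A.IsHermitian := hpd.1
  have hAdet : IsUnit A.det := hpd.det_pos.ne'.isUnit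
  have hAx : A *ᵥ xstar = c := by
    rw [hxstar, Matrix.mulVec_mulVec, Matrix.mul_nonsing_inv A hAdet, Matrix.one_mulVec]
  set U : Matrix (Fin n) (Fin n) ℝ :=
    (Matrix.IsHermitian.eigenvectorUnitary hA : Matrix (Fin n) (Fin n) ℝ) with hUdef
  set d : Fin n → ℝ := hA.eigenvalues with hddef
  have hdiag : star U * A * U = Matrix.diagonal d := by
    have h := Matrix.IsHermitian.conjStarAlgAut_star_eigenvectorUnitary hA
    rw [Unitary.conjStarAlgAut_apply, Unitary.coe_star, star_star] at h
    have h2 : (RCLike.ofReal ∘ hA.eigenvalues : Fin n → ℝ) = d := by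
      funext i; simp [RCLike.ofReal_real_eq_id, hddef]
    rw [h2] at h
    exact h
  have hUV : U * star U = 1 :=
    Matrix.mem_unitaryGroup_iff.mp (Matrix.IsHermitian.eigenvectorUnitary hA).2
  have hcomm : star U * A = Matrix.diagonal d * star U := by
    calc star U * A = star U * A * (U * star U) := by rw [hUV, mul_one]
      _ = (star U * A * U) * star U := by rw [mul_assoc, mul_assoc, mul_assoc]
      _ = Matrix.diagonal d * star U := by rw [hdiag]
  have hnorm : ∀ v : Fin n → ℝ, ∑ i, ((star U *ᵥ v) i)^2 = ∑ i, (v i)^2 := by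
    intro v
    have hvm : (star U *ᵥ v) ᵥ* star U = v := by
      have h1 : star U *ᵥ v = v ᵥ* (star U)ᵀ := (Matrix.vecMul_transpose _ _).symm
      rw [h1, Matrix.vecMul_vecMul]
      have h2 : (star U)ᵀ * star U = 1 := by
        rw [Matrix.star_eq_conjTranspose, Matrix.conjTranspose_eq_transpose_of_trivial,
          Matrix.transpose_transpose, ← Matrix.conjTranspose_eq_transpose_of_trivial,
          ← Matrix.star_eq_conjTranspose]
        exact hUV
      rw [h2, Matrix.vecMul_one]
    have h3 : (star U *ᵥ v) ⬝ᵥ (star U *ᵥ v) = v ⬝ᵥ v := by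
      rw [Matrix.dotProduct_mulVec, hvm]
    simpa [dotProduct, pow_two] using h3
  have hAe : ∀ v : Fin n → ℝ, star U *ᵥ (A *ᵥ v) = Matrix.diagonal d *ᵥ (star U *ᵥ v) := by
    intro v; rw [Matrix.mulVec_mulVec, hcomm, ← Matrix.mulVec_mulVec]
  -- coordinates of the error, step 1
  have he1 : x 1 - xstar = (x 0 - xstar) - α • (A *ᵥ (x 0 - xstar)) := by
    rw [hx1, ← hAx, Matrix.mulVec_sub]
    module
  have hy1 : ∀ i, (star U *ᵥ (x 1 - xstar)) i = (1 - α * d i) * (star U *ᵥ (x 0 - xstar)) i := by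
    intro i
    have h4 : (star U *ᵥ (x 1 - xstar)) = (star U *ᵥ (x 0 - xstar)) - α • (Matrix.diagonal d *ᵥ (star U *ᵥ (x 0 - xstar))) := by
      simp only [he1, Matrix.mulVec_sub, Matrix.mulVec_smul, hAe]
    rw [h4]
    simp only [Pi.sub_apply, Pi.smul_apply, Matrix.mulVec_diagonal, smul_eq_mul]
    ring
  -- coordinates of the error, recurrence
  have hyrec : ∀ k : ℕ, 1 ≤ k → ∀ i,
      (star U *ᵥ (x (k+1) - xstar)) i = (1+q^2)*(1 - α * d i)*(star U *ᵥ (x k - xstar)) i - q^2 * (star U *ᵥ (x (k-1) - xstar)) i := by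
    intro k hk i
    have he : x (k+1) - xstar = ((1:ℝ)+β) • (x k - xstar) - β • (x (k-1) - xstar)
        - ((1+β)*α) • (A *ᵥ (x k - xstar)) := by
      rw [hrec k hk, ← hAx, Matrix.mulVec_sub]
      module
    have h4 : (star U *ᵥ (x (k+1) - xstar)) = ((1:ℝ)+β) • (star U *ᵥ (x k - xstar)) - β • (star U *ᵥ (x (k-1) - xstar))
        - ((1+β)*α) • (Matrix.diagonal d *ᵥ (star U *ᵥ (x k - xstar))) := by
      simp only [he, Matrix.mulVec_sub, Matrix.mulVec_smul, hAe]
    rw [h4]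
    simp only [Pi.sub_apply, Pi.smul_apply, Matrix.mulVec_diagonal, smul_eq_mul, hβ]
    ring
  -- eigenvalue bound
  have hmb : ∀ i, |1 - α * d i| ≤ 2*q/(1+q^2) := by
    intro i
    obtain ⟨hd1, hd2⟩ := hspec (d i) (hA.eigenvalues_mem_spectrum_real i)
    rw [hqid]
    have e : 1 - α * d i = (a + b - 2 * d i)/(a+b) := by
      rw [hα]; field_simp
    rw [e, abs_div, abs_of_pos hab0]
    exact (div_le_div_iff_of_pos_right hab0).mpr (abs_le.mpr ⟨by linarith, by linarith⟩)
  -- per-coordinate bound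
  have hcoord : ∀ i, ∀ k : ℕ,
      |(star U *ᵥ (x k - xstar)) i|
        ≤ q^k * (1 + k*(1-q^2)/(1+q^2)) * |(star U *ᵥ (x 0 - xstar)) i| := by
    intro i
    refine scalar_bound q (1 - α * d i) hq0 hq1 (hmb i)
      (fun k => (star U *ᵥ (x k - xstar)) i) (hy1 i) ?_
    intro k
    have h := hyrec (k+1) (Nat.le_add_left 1 k) i
    simpa only [Nat.add_sub_cancel] using h
  intro k
  have hγ0 : (0:ℝ) ≤ (k:ℝ)*(1-q^2)/(1+q^2) :=
    div_nonneg (mul_nonneg (Nat.cast_nonneg k) (by nlinarith)) hq2.le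
  have hCk : 0 ≤ q^k * (1 + (k:ℝ)*(1-q^2)/(1+q^2)) :=
    mul_nonneg (pow_nonneg hq0.le k) (by linarith)
  have hsum_le : ∑ i, ((star U *ᵥ (x k - xstar)) i)^2
      ≤ (q^k * (1 + (k:ℝ)*(1-q^2)/(1+q^2)))^2 * ∑ i, ((star U *ᵥ (x 0 - xstar)) i)^2 := by
    rw [Finset.mul_sum]
    apply Finset.sum_le_sum
    intro i _
    have hb := hcoord i k
    calc ((star U *ᵥ (x k - xstar)) i)^2 = |(star U *ᵥ (x k - xstar)) i|^2 := (sq_abs _).symm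
      _ ≤ (q^k * (1 + (k:ℝ)*(1-q^2)/(1+q^2)) * |(star U *ᵥ (x 0 - xstar)) i|)^2 :=
          pow_le_pow_left₀ (abs_nonneg _) hb 2
      _ = (q^k * (1 + (k:ℝ)*(1-q^2)/(1+q^2)))^2 * ((star U *ᵥ (x 0 - xstar)) i)^2 := by
          rw [mul_pow, sq_abs]
  calc enorm₂ (x k - xstar) = Real.sqrt (∑ i, ((star U *ᵥ (x k - xstar)) i)^2) := by
        rw [show enorm₂ (x k - xstar) = Real.sqrt (∑ i, ((x k - xstar) i)^2) from rfl,
          ← hnorm (x k - xstar)]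
    _ ≤ Real.sqrt ((q^k * (1 + (k:ℝ)*(1-q^2)/(1+q^2)))^2 * ∑ i, ((star U *ᵥ (x 0 - xstar)) i)^2) :=
        Real.sqrt_le_sqrt hsum_le
    _ = q^k * (1 + (k:ℝ)*(1-q^2)/(1+q^2)) * Real.sqrt (∑ i, ((star U *ᵥ (x 0 - xstar)) i)^2) := by
        rw [Real.sqrt_mul (sq_nonneg _), Real.sqrt_sq hCk]
    _ = q^k * (1 + (k:ℝ)*(1-q^2)/(1+q^2)) * enorm₂ (x 0 - xstar) := by
        rw [show enorm₂ (x 0 - xstar) = Real.sqrt (∑ i, ((x 0 - xstar) i)^2) from rfl,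
          ← hnorm (x 0 - xstar)]
end

section
/- Let T be a real n×n matrix with nonnegative entries (T ≥ 0 entrywise) and spectral radius ρ = ρ(T) < 1, suppose the spectrum of A = I - T consists of positive real numbers, and let α, β be real numbers with α > 0 and |1+β|(|1-α| + αρ) + |β| < 1. Then the spectral radius of the entrywise absolute value |T_{α,β}| of the 2n×2n block matrix T_{α,β} = [[(1+β)(I - αA), -βI], [I, 0]] is strictly less than 1. -/
open Matrix Filter
open scoped ENNReal NNReal Topology

namespace ASORHelp

lemma mem_spectrum_iff_det {m : Type*} [Fintype m] [DecidableEq m]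
    (M : Matrix m m ℂ) (z : ℂ) :
    z ∈ spectrum ℂ M ↔ (z • (1 : Matrix m m ℂ) - M).det = 0 := by
  rw [spectrum.mem_iff, Matrix.isUnit_iff_isUnit_det, isUnit_iff_ne_zero, not_not,
    Algebra.algebraMap_eq_smul_one]

lemma norm_le_specRad {m : Type*} [Fintype m] [DecidableEq m]
    {M : Matrix m m ℂ} {z : ℂ} (hz : z ∈ spectrum ℂ M) : ‖z‖ ≤ specRad M :=
  le_csSup ((M.finite_spectrum.image _).bddAbove) ⟨z, hz, rfl⟩

lemma specRad_nonneg {m : Type*} [Fintype m] [DecidableEq m]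
    (M : Matrix m m ℂ) : 0 ≤ specRad M :=
  Real.sSup_nonneg (by rintro x ⟨z, _, rfl⟩; exact norm_nonneg z)

section Mono
variable {m : Type*} [Fintype m] [DecidableEq m]

attribute [local instance] Matrix.linftyOpNormedRing Matrix.linftyOpNormedAlgebra

noncomputable instance : CompleteSpace (Matrix m m ℂ) := FiniteDimensional.complete ℂ _

lemma spectralRadius_le_ofReal_specRad (M : Matrix m m ℂ) :
    spectralRadius ℂ M ≤ ENNReal.ofReal (specRad M) := by
  rw [spectralRadius]
  refine iSup₂_le fun z hz => ?_
  rw [show (‖z‖₊ : ℝ≥0∞) = ENNReal.ofReal ‖z‖ from (ofReal_norm z).symm]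
  exact ENNReal.ofReal_le_ofReal (norm_le_specRad hz)

lemma coe_nnnorm_le_spectralRadius {M : Matrix m m ℂ} {z : ℂ} (hz : z ∈ spectrum ℂ M) :
    (‖z‖₊ : ℝ≥0∞) ≤ spectralRadius ℂ M :=
  le_iSup₂ (f := fun k (_ : k ∈ spectrum ℂ M) => (‖k‖₊ : ℝ≥0∞)) z hz

lemma spectralRadius_mono_of_nnnorm_pow (A B : Matrix m m ℂ)
    (h : ∀ k : ℕ, ‖A ^ k‖₊ ≤ ‖B ^ k‖₊) :
    spectralRadius ℂ A ≤ spectralRadius ℂ B := by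
  refine le_of_tendsto_of_tendsto'
    (spectrum.pow_nnnorm_pow_one_div_tendsto_nhds_spectralRadius A)
    (spectrum.pow_nnnorm_pow_one_div_tendsto_nhds_spectralRadius B)
    fun k => ?_
  exact ENNReal.rpow_le_rpow (by exact_mod_cast h k) (by positivity)

lemma pow_entry_mono (B C : Matrix m m ℝ) (hB0 : ∀ i j, 0 ≤ B i j)
    (hBC : ∀ i j, B i j ≤ C i j) (k : ℕ) :
    (∀ i j, 0 ≤ (B ^ k) i j) ∧ (∀ i j, (B ^ k) i j ≤ (C ^ k) i j) := by
  induction k with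
  | zero =>
    constructor <;> intro i j <;> simp [Matrix.one_apply] <;> split <;> norm_num
  | succ k ih =>
    obtain ⟨ih0, ihle⟩ := ih
    constructor <;> intro i j
    · rw [pow_succ, Matrix.mul_apply]
      exact Finset.sum_nonneg fun l _ => mul_nonneg (ih0 i l) (hB0 l j)
    · rw [pow_succ, pow_succ, Matrix.mul_apply, Matrix.mul_apply]
      exact Finset.sum_le_sum fun l _ => mul_le_mul (ihle i l) (hBC l j) (hB0 l j)
        ((ih0 i l).trans (ihle i l))

lemma nnnorm_le_of_entry_le {B C : Matrix m m ℝ} (hB0 : ∀ i j, 0 ≤ B i j)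
    (hBC : ∀ i j, B i j ≤ C i j) : ‖B‖₊ ≤ ‖C‖₊ := by
  rw [Matrix.linfty_opNNNorm_def, Matrix.linfty_opNNNorm_def]
  refine Finset.sup_mono_fun fun i _ => Finset.sum_le_sum fun j _ => ?_
  have h1 : ‖B i j‖ ≤ ‖C i j‖ := by
    rw [Real.norm_eq_abs, Real.norm_eq_abs, abs_of_nonneg (hB0 i j),
      abs_of_nonneg ((hB0 i j).trans (hBC i j))]
    exact hBC i j
  exact h1

lemma nnnorm_map_ofReal (B : Matrix m m ℝ) : ‖B.map (Complex.ofReal)‖₊ = ‖B‖₊ := by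
  rw [Matrix.linfty_opNNNorm_def, Matrix.linfty_opNNNorm_def]
  congr 1; ext i; congr 1; ext j
  simp [Matrix.map_apply]

lemma map_ofReal_pow (B : Matrix m m ℝ) (k : ℕ) :
    (B.map (Complex.ofReal)) ^ k = (B ^ k).map (Complex.ofReal) := by
  have h : ∀ M : Matrix m m ℝ, M.map (Complex.ofReal) = (Complex.ofRealHom.mapMatrix) M :=
    fun M => rfl
  rw [h, h, map_pow]

lemma specRadR_mono {B C : Matrix m m ℝ} (hB0 : ∀ i j, 0 ≤ B i j)
    (hBC : ∀ i j, B i j ≤ C i j) : specRadR B ≤ specRadR C := by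
  have hpow : ∀ k : ℕ, ‖(B.map Complex.ofReal) ^ k‖₊ ≤ ‖(C.map Complex.ofReal) ^ k‖₊ := by
    intro k
    rw [map_ofReal_pow, map_ofReal_pow, nnnorm_map_ofReal, nnnorm_map_ofReal]
    exact nnnorm_le_of_entry_le (pow_entry_mono B C hB0 hBC k).1 (pow_entry_mono B C hB0 hBC k).2
  have h1 := spectralRadius_mono_of_nnnorm_pow _ _ hpow
  refine Real.sSup_le ?_ (specRad_nonneg _)
  rintro x ⟨z, hz, rfl⟩
  have h2 : (‖z‖₊ : ℝ≥0∞) ≤ ENNReal.ofReal (specRad (C.map Complex.ofReal)) :=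
    (coe_nnnorm_le_spectralRadius hz).trans (h1.trans (spectralRadius_le_ofReal_specRad _))
  rw [show (‖z‖₊ : ℝ≥0∞) = ENNReal.ofReal ‖z‖ from (ofReal_norm z).symm] at h2
  exact (ENNReal.ofReal_le_ofReal_iff (specRad_nonneg _)).mp h2

end Mono

section Blocks
variable {n : Type*} [Fintype n] [DecidableEq n]

lemma companion_spectrum (S : Matrix n n ℂ) (b : ℂ) {lam : ℂ} (hlam : lam ≠ 0)
    (h : lam ∈ spectrum ℂ
      (fromBlocks S (b • (1 : Matrix n n ℂ)) (1 : Matrix n n ℂ) (0 : Matrix n n ℂ))) :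
    lam - b * lam⁻¹ ∈ spectrum ℂ S := by
  rw [mem_spectrum_iff_det] at h ⊢
  have h1 : lam • (1 : Matrix (n ⊕ n) (n ⊕ n) ℂ) - fromBlocks S (b • 1) 1 0
      = fromBlocks (lam • 1 - S) (-(b • 1)) (-1) (lam • 1) := by
    rw [← fromBlocks_one, fromBlocks_smul]
    ext i j
    rcases i with i | i <;> rcases j with j | j <;> simp
  haveI : Invertible (lam • (1 : Matrix n n ℂ)) :=
    ⟨lam⁻¹ • 1, by rw [smul_mul_smul_comm, inv_mul_cancel₀ hlam, one_mul, one_smul],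
      by rw [smul_mul_smul_comm, mul_inv_cancel₀ hlam, one_mul, one_smul]⟩
  have hinv : ⅟(lam • (1 : Matrix n n ℂ)) = lam⁻¹ • 1 :=
    invOf_eq_right_inv (by rw [smul_mul_smul_comm, mul_inv_cancel₀ hlam, one_mul, one_smul])
  rw [h1, Matrix.det_fromBlocks₂₂, hinv] at h
  have e1 : (-(b • 1)) * (lam⁻¹ • (1 : Matrix n n ℂ)) * (-1)
      = (b * lam⁻¹) • (1 : Matrix n n ℂ) := by
    simp [smul_mul_smul_comm, smul_smul, mul_comm]
  have h2 : (lam • 1 - S) - (-(b • 1)) * (lam⁻¹ • (1 : Matrix n n ℂ)) * (-1)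
      = (lam - b * lam⁻¹) • (1 : Matrix n n ℂ) - S := by
    rw [e1, sub_right_comm, ← sub_smul]
  rw [h2] at h
  rcases mul_eq_zero.mp h with h3 | h3
  · exact absurd h3 (by simp [Matrix.det_smul, pow_ne_zero _ hlam])
  · exact h3

lemma affine_spectrum_bound (Tc : Matrix n n ℂ) (c d : ℝ) (hc : 0 ≤ c) (hd : 0 ≤ d)
    {z : ℂ}
    (hz : z ∈ spectrum ℂ ((c : ℂ) • (1 : Matrix n n ℂ) + (d : ℂ) • Tc)) :
    ‖z‖ ≤ c + d * specRad Tc := by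
  have hρ : 0 ≤ specRad Tc := specRad_nonneg Tc
  rw [mem_spectrum_iff_det] at hz
  have key : z • (1 : Matrix n n ℂ) - ((c : ℂ) • 1 + (d : ℂ) • Tc)
      = (z - c) • (1 : Matrix n n ℂ) - (d : ℂ) • Tc := by
    rw [sub_smul, sub_sub]
  rw [key] at hz
  rcases eq_or_ne d 0 with h0 | h0
  · subst h0
    simp only [Complex.ofReal_zero, zero_smul, sub_zero, Matrix.det_smul, det_one, mul_one] at hz
    have : z = (c : ℂ) := by
      have h1 : z - (c : ℂ) = 0 := by
        by_contra h1
        exact (pow_ne_zero _ h1) hz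
      exact sub_eq_zero.mp h1
    rw [this, Complex.norm_real, Real.norm_eq_abs, abs_of_nonneg hc]
    nlinarith [mul_nonneg hd hρ]
  · have hdc : (d : ℂ) ≠ 0 := by exact_mod_cast h0
    have key2 : (z - c) • (1 : Matrix n n ℂ) - (d : ℂ) • Tc
        = (d : ℂ) • (((z - c) / d) • (1 : Matrix n n ℂ) - Tc) := by
      rw [smul_sub, smul_smul, mul_div_cancel₀ _ hdc]
    rw [key2, Matrix.det_smul] at hz
    have h3 : (((z - c) / d) • (1 : Matrix n n ℂ) - Tc).det = 0 := by
      rcases mul_eq_zero.mp hz with h3 | h3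
      · exact absurd h3 (pow_ne_zero _ hdc)
      · exact h3
    have h4 : (z - c) / d ∈ spectrum ℂ Tc := (mem_spectrum_iff_det Tc _).mpr h3
    have h5 : ‖(z - c) / d‖ ≤ specRad Tc := norm_le_specRad h4
    have h6 : ‖z - (c : ℂ)‖ ≤ d * specRad Tc := by
      rw [norm_div, Complex.norm_real, Real.norm_eq_abs, abs_of_nonneg hd] at h5
      rw [div_le_iff₀ (lt_of_le_of_ne hd (Ne.symm h0))] at h5
      linarith [h5]
    calc ‖z‖ = ‖(z - c) + (c : ℂ)‖ := by ring_nf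
      _ ≤ ‖z - (c:ℂ)‖ + ‖(c : ℂ)‖ := norm_add_le _ _
      _ ≤ d * specRad Tc + c := by
          rw [Complex.norm_real, Real.norm_eq_abs, abs_of_nonneg hc]; linarith
      _ = c + d * specRad Tc := by ring

end Blocks
end ASORHelp

open ASORHelp

theorem asynchronous_second_order_richardson_convergence
    {n : ℕ} (T : Matrix (Fin n) (Fin n) ℝ)
    (hT : ∀ i j, 0 ≤ T i j)
    (ρ : ℝ) (hρ : ρ = specRadR T) (hρ1 : ρ < 1)
    (hspec : ∀ μ ∈ spectrum ℂ
        (((1 : Matrix (Fin n) (Fin n) ℝ) - T).map Complex.ofReal),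
      ∃ r : ℝ, 0 < r ∧ μ = (r : ℂ))
    (α β : ℝ) (hα : 0 < α)
    (hcond : |1 + β| * (|1 - α| + α * ρ) + |β| < 1) :
    specRadR (Matrix.of fun i j =>
      |(Matrix.fromBlocks
          ((1 + β) • ((1 : Matrix (Fin n) (Fin n) ℝ)
            - α • ((1 : Matrix (Fin n) (Fin n) ℝ) - T)))
          (-β • (1 : Matrix (Fin n) (Fin n) ℝ))
          (1 : Matrix (Fin n) (Fin n) ℝ)
          (0 : Matrix (Fin n) (Fin n) ℝ)) i j|) < 1 := by
  classical
  set W : Matrix (Fin n ⊕ Fin n) (Fin n ⊕ Fin n) ℝ := Matrix.of fun i j =>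
      |(Matrix.fromBlocks
          ((1 + β) • ((1 : Matrix (Fin n) (Fin n) ℝ)
            - α • ((1 : Matrix (Fin n) (Fin n) ℝ) - T)))
          (-β • (1 : Matrix (Fin n) (Fin n) ℝ))
          (1 : Matrix (Fin n) (Fin n) ℝ)
          (0 : Matrix (Fin n) (Fin n) ℝ)) i j| with hW
  set D : Matrix (Fin n ⊕ Fin n) (Fin n ⊕ Fin n) ℝ :=
      Matrix.fromBlocks
        (|1 + β| • (|1 - α| • (1 : Matrix (Fin n) (Fin n) ℝ) + α • T))
        (|β| • (1 : Matrix (Fin n) (Fin n) ℝ))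
        (1 : Matrix (Fin n) (Fin n) ℝ)
        (0 : Matrix (Fin n) (Fin n) ℝ) with hD
  have hW0 : ∀ i j, 0 ≤ W i j := fun i j => abs_nonneg _
  have hWD : ∀ i j, W i j ≤ D i j := by
    rintro (i | i) (j | j)
    · -- top-left
      simp only [hW, hD, Matrix.of_apply, Matrix.fromBlocks_apply₁₁, Matrix.smul_apply,
        Matrix.sub_apply, Matrix.add_apply, Matrix.one_apply, smul_eq_mul]
      by_cases hij : i = j
      · subst hij
        simp only [if_pos rfl, ite_true]
        rw [abs_mul]
        have hinner : (1 : ℝ) - α * (1 - T i i) = (1 - α) + α * T i i := by ring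
        rw [hinner]
        have h2 : |(1 - α) + α * T i i| ≤ |1 - α| + α * T i i := by
          refine (abs_add_le _ _).trans ?_
          rw [abs_of_nonneg (mul_nonneg hα.le (hT i i))]
        have h3 := mul_le_mul_of_nonneg_left h2 (abs_nonneg (1 + β))
        have h4 : |1 + β| * (|1 - α| * 1 + α * T i i)
            = |1 + β| * (|1 - α| + α * T i i) := by ring
        rw [h4]
        exact h3
      · simp only [if_neg hij]
        rw [abs_mul]
        have h5 : |(0 : ℝ) - α * (0 - T i j)| = α * T i j := by
          rw [zero_sub, zero_sub, mul_neg, neg_neg, abs_of_nonneg (mul_nonneg hα.le (hT i j))]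
        rw [h5]
        exact le_of_eq (by ring)
    · -- top-right
      simp only [hW, hD, Matrix.of_apply, Matrix.fromBlocks_apply₁₂, Matrix.smul_apply,
        Matrix.one_apply, smul_eq_mul]
      by_cases hij : i = j
      · subst hij; simp [abs_neg]
      · simp [if_neg hij]
    · -- bottom-left
      simp only [hW, hD, Matrix.of_apply, Matrix.fromBlocks_apply₂₁, Matrix.one_apply]
      by_cases hij : i = j
      · subst hij; simp
      · simp [if_neg hij]
    · -- bottom-right
      simp [hW, hD]
  have step1 : specRadR W ≤ specRadR D := specRadR_mono hW0 hWD
  -- complexified D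
  set c : ℝ := |1 + β| * |1 - α| with hc
  set d : ℝ := |1 + β| * α with hd'
  set Tc : Matrix (Fin n) (Fin n) ℂ := T.map Complex.ofReal with hTc
  have hmap : D.map Complex.ofReal =
      Matrix.fromBlocks ((c : ℂ) • (1 : Matrix (Fin n) (Fin n) ℂ) + (d : ℂ) • Tc)
        (((|β| : ℝ) : ℂ) • (1 : Matrix (Fin n) (Fin n) ℂ))
        (1 : Matrix (Fin n) (Fin n) ℂ) (0 : Matrix (Fin n) (Fin n) ℂ) := by
    ext i j
    rcases i with i | i <;> rcases j with j | j <;>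
      simp only [hD, hc, hd', hTc, Matrix.map_apply, Matrix.fromBlocks_apply₁₁,
        Matrix.fromBlocks_apply₁₂, Matrix.fromBlocks_apply₂₁, Matrix.fromBlocks_apply₂₂,
        Matrix.smul_apply, Matrix.add_apply, Matrix.one_apply, Matrix.zero_apply,
        smul_eq_mul] <;>
      [skip; skip; skip; skip]
    · by_cases hij : i = j <;> simp [hij] <;> push_cast <;> ring
    · by_cases hij : i = j <;> simp [hij]
    · by_cases hij : i = j <;> simp [hij]
    · simp
  -- every eigenvalue of D has modulus < 1
  have step2 : ∀ z ∈ spectrum ℂ (D.map Complex.ofReal), ‖z‖ < 1 := by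
    intro z hz
    by_contra hge
    push_neg at hge
    have hz1 : (1 : ℝ) ≤ ‖z‖ := hge
    have hzne : z ≠ 0 := by
      intro h; rw [h, norm_zero] at hz1; linarith
    rw [hmap] at hz
    have hw := companion_spectrum _ ((|β| : ℝ) : ℂ) hzne hz
    have hbound := affine_spectrum_bound Tc c d
      (mul_nonneg (abs_nonneg _) (abs_nonneg _)) (mul_nonneg (abs_nonneg _) hα.le) hw
    have hspecT : specRad Tc = ρ := by rw [hρ]; rfl
    rw [hspecT] at hbound
    have hK : c + d * ρ = |1 + β| * (|1 - α| + α * ρ) := by rw [hc, hd']; ring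
    have h7 : ‖z‖ ≤ ‖z - ((|β| : ℝ) : ℂ) * z⁻¹‖ + |β| := by
      have : z = (z - ((|β| : ℝ) : ℂ) * z⁻¹) + ((|β| : ℝ) : ℂ) * z⁻¹ := by ring
      calc ‖z‖ = ‖(z - ((|β| : ℝ) : ℂ) * z⁻¹) + ((|β| : ℝ) : ℂ) * z⁻¹‖ := by rw [← this]
        _ ≤ ‖z - ((|β| : ℝ) : ℂ) * z⁻¹‖ + ‖((|β| : ℝ) : ℂ) * z⁻¹‖ := norm_add_le _ _
        _ ≤ ‖z - ((|β| : ℝ) : ℂ) * z⁻¹‖ + |β| := by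
            have : ‖((|β| : ℝ) : ℂ) * z⁻¹‖ = |β| * ‖z‖⁻¹ := by
              rw [norm_mul, norm_inv, Complex.norm_real, Real.norm_eq_abs, abs_abs]
            rw [this]
            have h8 : ‖z‖⁻¹ ≤ 1 := inv_le_one_of_one_le₀ hz1
            nlinarith [abs_nonneg β]
    have : ‖z‖ ≤ |1 + β| * (|1 - α| + α * ρ) + |β| := by
      rw [← hK]; linarith
    linarith
  -- conclude
  have step3 : specRadR D < 1 := by
    rw [specRadR, specRad]
    rcases ((fun z : ℂ => ‖z‖) '' spectrum ℂ (D.map Complex.ofReal)).eq_empty_or_nonempty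
      with h | h
    · rw [h, Real.sSup_empty]; norm_num
    · have hfin : ((fun z : ℂ => ‖z‖) '' spectrum ℂ (D.map Complex.ofReal)).Finite :=
        ((D.map Complex.ofReal).finite_spectrum.image _)
      obtain ⟨z, hz, hEq⟩ := h.csSup_mem hfin
      rw [← hEq]
      exact step2 z hz
  exact lt_of_le_of_lt step1 step3
end

section
/- Let T be a real n×n matrix with nonnegative entries, set A = I - T, let ν ≥ 0 and let w ∈ ℝⁿ have strictly positive entries with Tw ≤ νw entrywise. Let α > 0, β ∈ ℝ, and γ > 0. Then the entrywise absolute value |T_{α,β}| of the 2n×2n block matrix T_{α,β} = [[(1+β)(I - αA), -βI], [I, 0]] satisfies |T_{α,β}|·(w, γw) ≤ σ·(w, γw) entrywise, where σ = max{1/γ, |1+β|(|1-α| + αν) + |β|γ}, and consequently ρ(|T_{α,β}|) ≤ σ. -/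
open Matrix

lemma specRadR_le_of_subinvariant {m : Type*} [Fintype m] [DecidableEq m]
    (M : Matrix m m ℝ) (hM : ∀ i j, 0 ≤ M i j) (σ : ℝ) (hσ : 0 ≤ σ)
    (v : m → ℝ) (hv : ∀ i, 0 < v i) (hMv : ∀ i, M.mulVec v i ≤ σ * v i) :
    specRadR M ≤ σ := by
  unfold specRadR specRad
  apply Real.sSup_le _ hσ
  rintro r ⟨z, hz, rfl⟩
  rw [spectrum.mem_iff] at hz
  rw [Matrix.isUnit_iff_isUnit_det, isUnit_iff_ne_zero, not_not] at hz
  obtain ⟨x, hx0, hx⟩ := (Matrix.exists_mulVec_eq_zero_iff (A := ℂ)).mpr hz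
  have hx' : ∀ i, (M.map Complex.ofReal).mulVec x i = z * x i := by
    intro i
    have h := congrFun hx i
    simp only [Matrix.sub_mulVec, Pi.sub_apply, Matrix.algebraMap_eq_diagonal,
      Matrix.mulVec_diagonal, Pi.algebraMap_apply, Algebra.algebraMap_self_apply,
      Pi.zero_apply, sub_eq_zero] at h
    exact h.symm
  -- choose index maximizing ‖x j‖ / v j
  obtain ⟨k, hk⟩ := Function.ne_iff.mp hx0
  obtain ⟨i, -, hi⟩ := Finset.exists_max_image Finset.univ
    (fun j => ‖x j‖ / v j) ⟨k, Finset.mem_univ k⟩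
  set c : ℝ := ‖x i‖ / v i with hc
  have hcpos : 0 < c := lt_of_lt_of_le
    (div_pos (norm_pos_iff.mpr hk) (hv k)) (hi k (Finset.mem_univ k))
  have hxle : ∀ j, ‖x j‖ ≤ c * v j := fun j =>
    (div_le_iff₀ (hv j)).mp (hi j (Finset.mem_univ j))
  have hxi : ‖x i‖ = c * v i := by
    rw [hc, div_mul_cancel₀ _ (hv i).ne']
  have key : ‖z‖ * (c * v i) ≤ σ * (c * v i) := by
    calc ‖z‖ * (c * v i) = ‖z * x i‖ := by rw [← hxi, norm_mul]
    _ = ‖(M.map Complex.ofReal).mulVec x i‖ := by rw [hx' i]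
    _ = ‖∑ j, (M i j : ℂ) * x j‖ := by
        simp [Matrix.mulVec, dotProduct, Matrix.map_apply]
    _ ≤ ∑ j, ‖(M i j : ℂ) * x j‖ := norm_sum_le _ _
    _ = ∑ j, M i j * ‖x j‖ := by
        refine Finset.sum_congr rfl fun j _ => ?_
        rw [norm_mul, Complex.norm_real, Real.norm_eq_abs, abs_of_nonneg (hM i j)]
    _ ≤ ∑ j, M i j * (c * v j) := by
        refine Finset.sum_le_sum fun j _ => mul_le_mul_of_nonneg_left (hxle j) (hM i j)
    _ = c * M.mulVec v i := by
        simp only [Matrix.mulVec, dotProduct, Finset.mul_sum]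
        exact Finset.sum_congr rfl fun j _ => by ring
    _ ≤ c * (σ * v i) := mul_le_mul_of_nonneg_left (hMv i) hcpos.le
    _ = σ * (c * v i) := by ring
  exact le_of_mul_le_mul_right key (mul_pos hcpos (hv i))

theorem second_order_richardson_abs_block_subinvariance
    {n : ℕ} (T : Matrix (Fin n) (Fin n) ℝ)
    (hT : ∀ i j, 0 ≤ T i j)
    (ν : ℝ) (hν : 0 ≤ ν)
    (w : Fin n → ℝ) (hw : ∀ i, 0 < w i)
    (hsub : ∀ i, T.mulVec w i ≤ ν * w i)
    (α β γ : ℝ) (hα : 0 < α) (hγ : 0 < γ) :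
    (∀ i, (Matrix.of fun i j =>
        |(Matrix.fromBlocks
            ((1 + β) • ((1 : Matrix (Fin n) (Fin n) ℝ)
              - α • ((1 : Matrix (Fin n) (Fin n) ℝ) - T)))
            (-β • (1 : Matrix (Fin n) (Fin n) ℝ))
            (1 : Matrix (Fin n) (Fin n) ℝ)
            (0 : Matrix (Fin n) (Fin n) ℝ)) i j|).mulVec
          (Sum.elim w (fun j => γ * w j)) i
        ≤ max (1 / γ) (|1 + β| * (|1 - α| + α * ν) + |β| * γ)
            * Sum.elim w (fun j => γ * w j) i) ∧
    specRadR (Matrix.of fun i j =>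
        |(Matrix.fromBlocks
            ((1 + β) • ((1 : Matrix (Fin n) (Fin n) ℝ)
              - α • ((1 : Matrix (Fin n) (Fin n) ℝ) - T)))
            (-β • (1 : Matrix (Fin n) (Fin n) ℝ))
            (1 : Matrix (Fin n) (Fin n) ℝ)
            (0 : Matrix (Fin n) (Fin n) ℝ)) i j|)
      ≤ max (1 / γ) (|1 + β| * (|1 - α| + α * ν) + |β| * γ) := by
  set σ := max (1 / γ) (|1 + β| * (|1 - α| + α * ν) + |β| * γ) with hσdef
  have hσ1 : 1 / γ ≤ σ := le_max_left _ _
  have hσ0 : 0 < σ := lt_of_lt_of_le (by positivity) hσ1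
  have key : ∀ i, (Matrix.of fun i j =>
        |(Matrix.fromBlocks
            ((1 + β) • ((1 : Matrix (Fin n) (Fin n) ℝ)
              - α • ((1 : Matrix (Fin n) (Fin n) ℝ) - T)))
            (-β • (1 : Matrix (Fin n) (Fin n) ℝ))
            (1 : Matrix (Fin n) (Fin n) ℝ)
            (0 : Matrix (Fin n) (Fin n) ℝ)) i j|).mulVec
          (Sum.elim w (fun j => γ * w j)) i
        ≤ σ * Sum.elim w (fun j => γ * w j) i := by
    have hσ2 : |1 + β| * (|1 - α| + α * ν) + |β| * γ ≤ σ := le_max_right _ _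
    rintro (i | i)
    · -- first block row
      have e1 : ∀ j, |((1 + β) • ((1 : Matrix (Fin n) (Fin n) ℝ) - α • (1 - T))) i j|
          ≤ |1 + β| * (|1 - α| * (1 : Matrix (Fin n) (Fin n) ℝ) i j + α * T i j) := by
        intro j
        simp only [Matrix.smul_apply, Matrix.sub_apply, smul_eq_mul, abs_mul]
        refine mul_le_mul_of_nonneg_left ?_ (abs_nonneg _)
        by_cases h : i = j
        · subst h
          rw [Matrix.one_apply_eq]
          have hr : (1 : ℝ) - α * (1 - T i i) = (1 - α) + α * T i i := by ring
          rw [hr]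
          refine (abs_add_le _ _).trans ?_
          rw [abs_mul, abs_of_nonneg hα.le, abs_of_nonneg (hT i i), mul_one]
        · rw [Matrix.one_apply_ne h]
          have hr : (0:ℝ) - α * (0 - T i j) = α * T i j := by ring
          rw [hr, abs_of_nonneg (mul_nonneg hα.le (hT i j))]
          simp
      have e2 : ∀ j, |(-β • (1 : Matrix (Fin n) (Fin n) ℝ)) i j|
          = |β| * (1 : Matrix (Fin n) (Fin n) ℝ) i j := by
        intro j
        by_cases h : i = j
        · subst h; simp
        · simp [Matrix.one_apply_ne h]
      have hone : ∀ (g : Fin n → ℝ), ∑ j, (1 : Matrix (Fin n) (Fin n) ℝ) i j * g j = g i := by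
        intro g
        simpa [Matrix.mulVec, dotProduct] using congrFun (Matrix.one_mulVec g) i
      have hA : ∑ j, |1 + β| * (|1 - α| * (1 : Matrix (Fin n) (Fin n) ℝ) i j + α * T i j) * w j
          = |1 + β| * |1 - α| * w i + |1 + β| * α * T.mulVec w i := by
        have hr : ∀ j, |1 + β| * (|1 - α| * (1 : Matrix (Fin n) (Fin n) ℝ) i j + α * T i j) * w j
            = |1 + β| * |1 - α| * ((1 : Matrix (Fin n) (Fin n) ℝ) i j * w j)
              + |1 + β| * α * (T i j * w j) := fun j => by ring
        simp only [hr, Finset.sum_add_distrib, ← Finset.mul_sum, hone w, Matrix.mulVec, dotProduct]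
      have hB : ∑ j, |β| * (1 : Matrix (Fin n) (Fin n) ℝ) i j * (γ * w j)
          = |β| * γ * w i := by
        have hr : ∀ j, |β| * (1 : Matrix (Fin n) (Fin n) ℝ) i j * (γ * w j)
            = |β| * γ * ((1 : Matrix (Fin n) (Fin n) ℝ) i j * w j) := fun j => by ring
        simp only [hr, ← Finset.mul_sum, hone w]
      simp only [Matrix.mulVec, dotProduct, Fintype.sum_sum_type, Matrix.of_apply,
        Matrix.fromBlocks_apply₁₁, Matrix.fromBlocks_apply₁₂, Sum.elim_inl, Sum.elim_inr]
      calc ∑ j, |((1 + β) • ((1 : Matrix (Fin n) (Fin n) ℝ) - α • (1 - T))) i j| * w j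
            + ∑ j, |(-β • (1 : Matrix (Fin n) (Fin n) ℝ)) i j| * (γ * w j)
          ≤ ∑ j, |1 + β| * (|1 - α| * (1 : Matrix (Fin n) (Fin n) ℝ) i j + α * T i j) * w j
            + ∑ j, |β| * (1 : Matrix (Fin n) (Fin n) ℝ) i j * (γ * w j) := by
            refine add_le_add (Finset.sum_le_sum fun j _ =>
              mul_le_mul_of_nonneg_right (e1 j) (hw j).le)
              (Finset.sum_le_sum fun j _ => ?_)
            rw [e2 j]
        _ = |1 + β| * |1 - α| * w i + |1 + β| * α * T.mulVec w i + |β| * γ * w i := by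
            rw [hA, hB]
        _ ≤ (|1 + β| * (|1 - α| + α * ν) + |β| * γ) * w i := by
            have h1 : T.mulVec w i ≤ ν * w i := hsub i
            nlinarith [abs_nonneg (1 + β), hw i, mul_nonneg (abs_nonneg (1+β)) hα.le]
        _ ≤ σ * w i := mul_le_mul_of_nonneg_right hσ2 (hw i).le
    · -- second block row
      have hcalc : (Matrix.of fun i j =>
          |(Matrix.fromBlocks
              ((1 + β) • ((1 : Matrix (Fin n) (Fin n) ℝ)
                - α • ((1 : Matrix (Fin n) (Fin n) ℝ) - T)))
              (-β • (1 : Matrix (Fin n) (Fin n) ℝ))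
              (1 : Matrix (Fin n) (Fin n) ℝ)
              (0 : Matrix (Fin n) (Fin n) ℝ)) i j|).mulVec
            (Sum.elim w (fun j => γ * w j)) (Sum.inr i) = w i := by
        simp only [Matrix.mulVec, dotProduct, Fintype.sum_sum_type, Matrix.of_apply,
          Matrix.fromBlocks_apply₂₁, Matrix.fromBlocks_apply₂₂, Sum.elim_inl, Sum.elim_inr,
          Matrix.zero_apply, abs_zero, zero_mul, Finset.sum_const_zero, add_zero,
          Matrix.one_apply]
        rw [Finset.sum_congr rfl (fun j _ => ?_), Finset.sum_ite_eq Finset.univ i w,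
          if_pos (Finset.mem_univ i)]
        by_cases h : i = j <;> simp [h]
      rw [hcalc]
      have h1 : (1:ℝ) ≤ σ * γ := by
        rw [div_le_iff₀ hγ] at hσ1
        linarith
      have := mul_le_mul_of_nonneg_right h1 (hw i).le
      simp only [Sum.elim_inr]
      nlinarith [hw i]
  refine ⟨key, ?_⟩
  refine specRadR_le_of_subinvariant _ (fun i j => abs_nonneg _) σ hσ0.le
    (Sum.elim w (fun j => γ * w j)) ?_ key
  rintro (i | i)
  · exact hw i
  · exact mul_pos hγ (hw i)
end

section
/- Let T be a real n×n matrix with nonnegative entries (T ≥ 0 entrywise) and spectral radius ρ = ρ(T) < 1, suppose the spectrum of A = I - T consists of positive real numbers, and let β be a real number with -1 < β < (1-ρ)/(1+ρ). Then the spectral radius of the entrywise absolute value |T_{1,β}| of the 2n×2n block matrix T_{1,β} = [[(1+β)T, -βI], [I, 0]] is strictly less than 1. -/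
open Matrix

lemma mem_spectrum_iff_exists_eig {m : Type*} [Fintype m] [DecidableEq m]
    (M : Matrix m m ℂ) (μ : ℂ) :
    μ ∈ spectrum ℂ M ↔ ∃ v, v ≠ 0 ∧ M *ᵥ v = μ • v := by
  rw [← AlgEquiv.spectrum_eq (Matrix.toLinAlgEquiv' : Matrix m m ℂ ≃ₐ[ℂ] _) M,
    ← Module.End.hasEigenvalue_iff_mem_spectrum]
  constructor
  · intro h
    obtain ⟨v, hv⟩ := h.exists_hasEigenvector
    exact ⟨v, hv.2, by simpa [Matrix.toLinAlgEquiv'_apply] using hv.apply_eq_smul⟩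
  · rintro ⟨v, hv0, hv⟩
    exact Module.End.hasEigenvalue_of_hasEigenvector
      ⟨Module.End.mem_eigenspace_iff.mpr (by simpa [Matrix.toLinAlgEquiv'_apply] using hv), hv0⟩

lemma norm_le_specRad_s16 {m : Type*} [Fintype m] [DecidableEq m]
    (M : Matrix m m ℂ) {μ : ℂ} (h : μ ∈ spectrum ℂ M) : ‖μ‖ ≤ specRad M :=
  le_csSup (((Matrix.finite_spectrum M).image _).bddAbove) ⟨μ, h, rfl⟩

lemma specRad_nonneg_s16 {m : Type*} [Fintype m] [DecidableEq m]
    (M : Matrix m m ℂ) : 0 ≤ specRad M := by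
  apply Real.sSup_nonneg
  rintro x ⟨z, _, rfl⟩
  exact norm_nonneg z

lemma specRad_lt_one {m : Type*} [Fintype m] [DecidableEq m]
    (M : Matrix m m ℂ) (h : ∀ μ ∈ spectrum ℂ M, ‖μ‖ < 1) : specRad M < 1 := by
  rcases Set.eq_empty_or_nonempty ((fun z : ℂ => ‖z‖) '' spectrum ℂ M) with he | hne
  · rw [specRad, he, Real.sSup_empty]; norm_num
  · obtain ⟨z, hz, hmem⟩ := hne.csSup_mem ((Matrix.finite_spectrum M).image _)
    rw [specRad, ← hmem]
    exact h z hz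

theorem asynchronous_second_order_richardson_alpha_one
    {n : ℕ} (T : Matrix (Fin n) (Fin n) ℝ)
    (hT : ∀ i j, 0 ≤ T i j)
    (ρ : ℝ) (hρ : ρ = specRadR T) (hρ1 : ρ < 1)
    (hspec : ∀ μ ∈ spectrum ℂ
        (((1 : Matrix (Fin n) (Fin n) ℝ) - T).map Complex.ofReal),
      ∃ r : ℝ, 0 < r ∧ μ = (r : ℂ))
    (β : ℝ) (hβneg : -1 < β) (hβ : β < (1 - ρ) / (1 + ρ)) :
    specRadR (Matrix.of fun i j =>
      |(Matrix.fromBlocks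
          ((1 + β) • T)
          (-β • (1 : Matrix (Fin n) (Fin n) ℝ))
          (1 : Matrix (Fin n) (Fin n) ℝ)
          (0 : Matrix (Fin n) (Fin n) ℝ)) i j|) < 1 := by
  have h1β : (0:ℝ) < 1 + β := by linarith
  have hρ0 : 0 ≤ ρ := hρ ▸ specRad_nonneg_s16 _
  have hkey : (1 + β) * ρ + |β| < 1 := by
    have h1ρ : (0:ℝ) < 1 + ρ := by linarith
    rw [lt_div_iff₀ h1ρ] at hβ
    rcases abs_cases β with ⟨h, _⟩ | ⟨h, _⟩ <;> nlinarith
  have hM : (Matrix.of fun i j => |(Matrix.fromBlocks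
          ((1 + β) • T) (-β • (1 : Matrix (Fin n) (Fin n) ℝ))
          (1 : Matrix (Fin n) (Fin n) ℝ) (0 : Matrix (Fin n) (Fin n) ℝ)) i j|)
      = Matrix.fromBlocks ((1 + β) • T) (|β| • (1 : Matrix (Fin n) (Fin n) ℝ)) 1 0 := by
    ext i j
    rcases i with i | i <;> rcases j with j | j <;>
      simp [Matrix.one_apply, abs_mul, abs_of_nonneg (hT _ _),
        abs_of_pos h1β, apply_ite abs, abs_neg]
  rw [hM]
  apply specRad_lt_one
  intro lam hlam
  rw [mem_spectrum_iff_exists_eig] at hlam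
  obtain ⟨v, hv0, hv⟩ := hlam
  have hA : ∀ i, ((1 + β : ℝ) : ℂ) * (∑ j, (T i j : ℂ) * v (Sum.inl j))
      + ((|β| : ℝ) : ℂ) * v (Sum.inr i) = lam * v (Sum.inl i) := by
    intro i
    have h := congrFun hv (Sum.inl i)
    simp only [Matrix.mulVec, dotProduct, Fintype.sum_sum_type,
      Matrix.fromBlocks_map, Matrix.fromBlocks_apply₁₁, Matrix.fromBlocks_apply₁₂,
      Matrix.map_apply, Matrix.smul_apply, Matrix.one_apply, smul_eq_mul,
      Pi.smul_apply] at h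
    push_cast at h
    simp only [apply_ite Complex.ofReal, Complex.ofReal_one, Complex.ofReal_zero,
      mul_ite, mul_one, mul_zero, ite_mul, zero_mul, Finset.sum_ite_eq,
      Finset.sum_ite_eq', Finset.mem_univ, if_true] at h
    rw [← h]
    push_cast
    rw [Finset.mul_sum]
    congr 1
    exact Finset.sum_congr rfl fun j _ => (mul_assoc _ _ _).symm
  have hB : ∀ i, v (Sum.inl i) = lam * v (Sum.inr i) := by
    intro i
    have h := congrFun hv (Sum.inr i)
    simp only [Matrix.mulVec, dotProduct, Fintype.sum_sum_type,
      Matrix.fromBlocks_map, Matrix.fromBlocks_apply₂₁, Matrix.fromBlocks_apply₂₂,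
      Matrix.map_apply, Matrix.one_apply, Matrix.zero_apply, Pi.smul_apply,
      smul_eq_mul] at h
    simp only [apply_ite Complex.ofReal, Complex.ofReal_one, Complex.ofReal_zero,
      ite_mul, one_mul, zero_mul, Finset.sum_ite_eq, Finset.sum_ite_eq',
      Finset.mem_univ, if_true, Finset.sum_const_zero, add_zero] at h
    exact h
  by_cases hlam0 : lam = 0
  · simp [hlam0]
  · have h1βc : ((1 + β : ℝ) : ℂ) ≠ 0 := Complex.ofReal_ne_zero.mpr (ne_of_gt h1β)
    set x : Fin n → ℂ := fun i => v (Sum.inl i) with hx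
    have hx0 : x ≠ 0 := by
      intro hx0
      apply hv0
      funext k
      rcases k with i | i
      · exact congrFun hx0 i
      · have h := hB i
        rw [show v (Sum.inl i) = x i from rfl, congrFun hx0 i] at h
        have : v (Sum.inr i) = 0 := by
          rcases mul_eq_zero.mp h.symm with h' | h'
          · exact absurd h' hlam0
          · exact h'
        simpa using this
    set μ : ℂ := (lam * lam - ((|β| : ℝ) : ℂ)) / (((1 + β : ℝ) : ℂ) * lam) with hμdef
    have hTx : (T.map Complex.ofReal) *ᵥ x = μ • x := by
      funext i
      simp only [Matrix.mulVec, dotProduct, Matrix.map_apply, Pi.smul_apply,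
        smul_eq_mul]
      rw [hμdef, div_mul_eq_mul_div, eq_comm, div_eq_iff (mul_ne_zero h1βc hlam0), eq_comm]
      have hAi := hA i
      have hBi := hB i
      linear_combination lam * hAi + ((|β| : ℝ) : ℂ) * hBi
    have hμspec : μ ∈ spectrum ℂ (T.map Complex.ofReal) :=
      (mem_spectrum_iff_exists_eig _ μ).mpr ⟨x, hx0, hTx⟩
    have hμρ : ‖μ‖ ≤ ρ := hρ ▸ norm_le_specRad_s16 _ hμspec
    have heq : lam * lam = ((1 + β : ℝ) : ℂ) * μ * lam + ((|β| : ℝ) : ℂ) := by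
      have hcancel := div_mul_cancel₀ (lam * lam - ((|β| : ℝ) : ℂ))
        (mul_ne_zero h1βc hlam0)
      rw [hμdef]
      linear_combination -hcancel
    have hnorm : ‖lam‖ ^ 2 ≤ (1 + β) * ‖μ‖ * ‖lam‖ + |β| := by
      have h2 : ‖lam * lam‖ ≤ ‖((1 + β : ℝ) : ℂ) * μ * lam‖ + ‖(((|β| : ℝ)) : ℂ)‖ := by
        rw [heq]; exact norm_add_le _ _
      rw [norm_mul, norm_mul, norm_mul] at h2
      rw [Complex.norm_real, Complex.norm_real, Real.norm_eq_abs, Real.norm_eq_abs,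
        abs_of_pos h1β, abs_abs] at h2
      rw [sq]
      exact h2
    by_contra hcon
    push_neg at hcon
    have hL0 : (0:ℝ) ≤ ‖lam‖ := norm_nonneg _
    nlinarith [abs_nonneg β, norm_nonneg μ, mul_le_mul_of_nonneg_right hμρ hL0]
end

section
/- Let ν ≥ 0 and β be real numbers. Then the inequality |1+β|ν + |β| < 1 holds if and only if ν < 1 and -1 < β < (1-ν)/(1+ν). In particular, if ν ≥ 1 or β ≤ -1, then |1+β|ν + |β| ≥ 1. -/
theorem second_order_richardson_parameter_criterion
    (ν β : ℝ) (hν : 0 ≤ ν) :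
    (|1 + β| * ν + |β| < 1 ↔ (ν < 1 ∧ -1 < β ∧ β < (1 - ν) / (1 + ν))) ∧
    ((1 ≤ ν ∨ β ≤ -1) → 1 ≤ |1 + β| * ν + |β|) := by
  have h1 : (0:ℝ) < 1 + ν := by linarith
  constructor
  · constructor
    · intro h
      have hb1 : |β| < 1 := by nlinarith [abs_nonneg (1+β), abs_nonneg β]
      have hb2 : -1 < β := by cases abs_lt.mp hb1; linarith
      have hb3 : β < 1 := by cases abs_lt.mp hb1; linarith
      have ha : |1+β| = 1+β := abs_of_pos (by linarith)
      refine ⟨?_, hb2, ?_⟩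
      · rcases le_or_gt 0 β with hb | hb
        · rw [abs_of_nonneg hb, ha] at h; nlinarith
        · rw [abs_of_neg hb, ha] at h; nlinarith
      · rw [lt_div_iff₀ h1]
        rcases le_or_gt 0 β with hb | hb
        · rw [abs_of_nonneg hb, ha] at h; nlinarith
        · rw [abs_of_neg hb, ha] at h; nlinarith
    · rintro ⟨hn, hb2, hb3⟩
      rw [lt_div_iff₀ h1] at hb3
      have ha : |1+β| = 1+β := abs_of_pos (by linarith)
      rcases le_or_gt 0 β with hb | hb
      · rw [abs_of_nonneg hb, ha]; nlinarith
      · rw [abs_of_neg hb, ha]; nlinarith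
  · rintro (h | h)
    · rcases le_or_gt (-1) β with hb | hb
      · have ha : |1+β| = 1+β := abs_of_nonneg (by linarith)
        rcases le_or_gt 0 β with hb2 | hb2
        · rw [abs_of_nonneg hb2, ha]; nlinarith
        · rw [abs_of_neg hb2, ha]; nlinarith
      · have ha : |1+β| = -(1+β) := abs_of_neg (by linarith)
        rw [abs_of_neg (by linarith : β < 0), ha]; nlinarith
    · have hb2 : β < 0 := by linarith
      rw [abs_of_neg hb2]
      rcases le_or_gt (1+β) 0 with hc | hc
      · rw [abs_of_nonpos hc]; nlinarith
      · rw [abs_of_pos hc]; nlinarith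
end

section
/- Let A be a complex n×n matrix whose entries are such that I - αA is a real matrix for the given real α (e.g., A real), and let α, β be real numbers. If λ ∈ ℂ is an eigenvalue of the entrywise absolute value |T_{α,β}| of the 2n×2n block matrix T_{α,β} = [[(1+β)(I - αA), -βI], [I, 0]], then there exists an eigenvalue μ of the entrywise absolute value |I - αA| such that λ² - |1+β|·μ·λ - |β| = 0. -/
open Matrix

lemma mem_spectrum_iff_exists_eigvec {m : Type*} [Fintype m] [DecidableEq m]
    (M : Matrix m m ℂ) (μ : ℂ) :
    μ ∈ spectrum ℂ M ↔ ∃ v, v ≠ 0 ∧ M.mulVec v = μ • v := by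
  rw [spectrum.mem_iff, Matrix.isUnit_iff_isUnit_det, isUnit_iff_ne_zero, not_ne_iff,
    ← Matrix.exists_mulVec_eq_zero_iff]
  constructor
  · rintro ⟨v, hv, h⟩
    refine ⟨v, hv, ?_⟩
    have : (algebraMap ℂ (Matrix m m ℂ)) μ *ᵥ v - M *ᵥ v = 0 := by
      rw [← Matrix.sub_mulVec, h]
    rw [sub_eq_zero] at this
    rw [← this, Algebra.algebraMap_eq_smul_one, Matrix.smul_mulVec, Matrix.one_mulVec]
  · rintro ⟨v, hv, h⟩
    refine ⟨v, hv, ?_⟩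
    rw [Matrix.sub_mulVec, h, Algebra.algebraMap_eq_smul_one, Matrix.smul_mulVec,
      Matrix.one_mulVec, sub_self]

theorem abs_second_order_richardson_eigenvalue_quadratic
    {n : ℕ} (A : Matrix (Fin n) (Fin n) ℂ) (α β : ℝ)
    (hreal : ∀ i j, ∃ r : ℝ,
      ((1 : Matrix (Fin n) (Fin n) ℂ) - (α : ℂ) • A) i j = (r : ℂ))
    (l : ℂ)
    (hl : l ∈ spectrum ℂ
      (Matrix.of fun i j =>
        ((Norm.norm
          ((Matrix.fromBlocks
            (((1 + β : ℝ) : ℂ) • ((1 : Matrix (Fin n) (Fin n) ℂ) - (α : ℂ) • A))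
            (-((β : ℝ) : ℂ) • (1 : Matrix (Fin n) (Fin n) ℂ))
            (1 : Matrix (Fin n) (Fin n) ℂ)
            (0 : Matrix (Fin n) (Fin n) ℂ)) i j) : ℝ) : ℂ))) :
    ∃ μ ∈ spectrum ℂ
      (Matrix.of fun i j =>
        ((Norm.norm (((1 : Matrix (Fin n) (Fin n) ℂ) - (α : ℂ) • A) i j) : ℝ) : ℂ)),
      l ^ 2 - ((|1 + β| : ℝ) : ℂ) * μ * l - ((|β| : ℝ) : ℂ) = 0 := by
  set B : Matrix (Fin n) (Fin n) ℂ :=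
    Matrix.of fun i j =>
      ((Norm.norm (((1 : Matrix (Fin n) (Fin n) ℂ) - (α : ℂ) • A) i j) : ℝ) : ℂ) with hB
  -- rewrite the big matrix as a block matrix
  have hM : (Matrix.of fun i j =>
        ((Norm.norm
          ((Matrix.fromBlocks
            (((1 + β : ℝ) : ℂ) • ((1 : Matrix (Fin n) (Fin n) ℂ) - (α : ℂ) • A))
            (-((β : ℝ) : ℂ) • (1 : Matrix (Fin n) (Fin n) ℂ))
            (1 : Matrix (Fin n) (Fin n) ℂ)
            (0 : Matrix (Fin n) (Fin n) ℂ)) i j) : ℝ) : ℂ))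
      = Matrix.fromBlocks (((|1 + β| : ℝ) : ℂ) • B) (((|β| : ℝ) : ℂ) • (1 : Matrix (Fin n) (Fin n) ℂ))
          (1 : Matrix (Fin n) (Fin n) ℂ) (0 : Matrix (Fin n) (Fin n) ℂ) := by
    have habs : ‖(1 + (β : ℂ))‖ = |1 + β| := by
      rw [show (1 + (β : ℂ)) = ((1 + β : ℝ) : ℂ) by push_cast; ring, Complex.norm_real, Real.norm_eq_abs]
    ext i j
    cases i <;> cases j <;>
      simp [hB, Matrix.one_apply, _root_.map_mul, Complex.norm_real, Real.norm_eq_abs, habs,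
        apply_ite (fun z : ℂ => ‖z‖), apply_ite (fun r : ℝ => (r : ℂ)), mul_comm]
  rw [hM, mem_spectrum_iff_exists_eigvec] at hl
  obtain ⟨v, hv, hveq⟩ := hl
  set x : Fin n → ℂ := v ∘ Sum.inl with hx
  set y : Fin n → ℂ := v ∘ Sum.inr with hy
  have hvelim : v = Sum.elim x y := (Sum.elim_comp_inl_inr v).symm
  rw [hvelim, Matrix.fromBlocks_mulVec] at hveq
  have h2 : ∀ i, x i = l * y i := by
    intro i
    have := congrFun hveq (Sum.inr i)
    simpa using this
  have h1 : ∀ i, ((|1 + β| : ℝ) : ℂ) * ((B *ᵥ x) i) + ((|β| : ℝ) : ℂ) * y i = l * x i := by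
    intro i
    have := congrFun hveq (Sum.inl i)
    simpa [Matrix.smul_mulVec, Matrix.add_mulVec, Matrix.one_mulVec] using this
  have hy0 : y ≠ 0 := by
    intro h0
    apply hv
    rw [hvelim, h0]
    have : x = 0 := by
      funext i
      rw [h2 i, h0]
      simp
    rw [this]
    ext (i | i) <;> simp
  have hxy : x = l • y := by funext i; simpa using h2 i
  -- key equation: (c*l) • (B *ᵥ y) + d • y = l^2 • y
  have key : ∀ i, (((|1 + β| : ℝ) : ℂ) * l) * ((B *ᵥ y) i) + ((|β| : ℝ) : ℂ) * y i
      = l ^ 2 * y i := by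
    intro i
    have := h1 i
    rw [hxy] at this
    rw [Matrix.mulVec_smul] at this
    simp only [Pi.smul_apply, smul_eq_mul] at this
    linear_combination this
  obtain ⟨i₀, hi₀⟩ : ∃ i, y i ≠ 0 := by
    by_contra h
    push_neg at h
    exact hy0 (funext h)
  by_cases hcl : ((|1 + β| : ℝ) : ℂ) * l = 0
  · -- then l^2 = |β|
    have hl2 : l ^ 2 = ((|β| : ℝ) : ℂ) := by
      have := key i₀
      rw [hcl, zero_mul, zero_add] at this
      exact (mul_right_cancel₀ hi₀ this).symm
    -- choose any eigenvalue of B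
    haveI : Nonempty (Fin n) := ⟨i₀⟩
    obtain ⟨μ, hμ⟩ := Module.End.exists_eigenvalue (Matrix.toLinAlgEquiv' B)
    refine ⟨μ, ?_, ?_⟩
    · have := Module.End.hasEigenvalue_iff_mem_spectrum.mp hμ
      rwa [AlgEquiv.spectrum_eq Matrix.toLinAlgEquiv' B] at this
    · rw [hl2]
      have : ((|1 + β| : ℝ) : ℂ) * μ * l = μ * (((|1 + β| : ℝ) : ℂ) * l) := by ring
      rw [this, hcl]
      ring
  · -- B has eigenvector y with eigenvalue μ = (l^2 - |β|)/(c*l)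
    set μ : ℂ := (l ^ 2 - ((|β| : ℝ) : ℂ)) / (((|1 + β| : ℝ) : ℂ) * l) with hμdef
    refine ⟨μ, ?_, ?_⟩
    · rw [mem_spectrum_iff_exists_eigvec]
      refine ⟨y, hy0, ?_⟩
      funext i
      have := key i
      simp only [Pi.smul_apply, smul_eq_mul, hμdef]
      field_simp [left_ne_zero_of_mul hcl, right_ne_zero_of_mul hcl]
      linear_combination this
    · rw [hμdef]
      field_simp [left_ne_zero_of_mul hcl, right_ne_zero_of_mul hcl]
      ring
end
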